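/- arXiv:2405.16074 — 2 statements merged into one kernel-verified Lean document; each statement's English description precedes it below -/
import Mathlib

section
/- Poincaré–Sobolev inequality on the infinite strip: for every q ∈ [2,∞) there exists a constant C(q) > 0, depending only on q, such that every continuously differentiable vector field u = (u₁,u₂) on Ω_∞ that vanishes identically for all sufficiently large |x₁|, satisfies ∂₁u₁ + ∂₂u₂ = 0 on Ω_∞, and satisfies u₂(x₁,0) = u₂(x₁,1) = 0 for all x₁ ∈ ℝ, obeys ‖u‖_{L^q(Ω_∞)} ≤ C(q)·‖∇u‖_{L²(Ω_∞)}. -/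
open MeasureTheory Set

noncomputable section

/-- first partial derivative in the horizontal direction -/
def pd1 (u : ℝ × ℝ → ℝ) (x : ℝ × ℝ) : ℝ := fderiv ℝ u x (1, 0)

/-- first partial derivative in the vertical direction -/
def pd2 (u : ℝ × ℝ → ℝ) (x : ℝ × ℝ) : ℝ := fderiv ℝ u x (0, 1)

/-- the infinite strip `Ω_∞ = ℝ × [0,1]` -/
def Strip : Set (ℝ × ℝ) := (univ : Set ℝ) ×ˢ (Icc (0 : ℝ) 1)

/-- `L^q` norm of a scalar function on a planar region -/
def lqNorm (q : ℝ) (Ω : Set (ℝ × ℝ)) (f : ℝ × ℝ → ℝ) : ℝ :=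
  (∫ x in Ω, |f x| ^ q) ^ (1 / q)

/-- `L^q` norm of a planar vector field (components `u1`, `u2`) -/
def lqNormVec (q : ℝ) (Ω : Set (ℝ × ℝ)) (u1 u2 : ℝ × ℝ → ℝ) : ℝ :=
  ((lqNorm q Ω u1) ^ q + (lqNorm q Ω u2) ^ q) ^ (1 / q)

/-- `L²` norm of the full gradient of a planar vector field -/
def gradL2Norm (Ω : Set (ℝ × ℝ)) (u1 u2 : ℝ × ℝ → ℝ) : ℝ :=
  ((lqNorm 2 Ω (pd1 u1)) ^ (2 : ℝ) + (lqNorm 2 Ω (pd2 u1)) ^ (2 : ℝ) +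
    (lqNorm 2 Ω (pd1 u2)) ^ (2 : ℝ) + (lqNorm 2 Ω (pd2 u2)) ^ (2 : ℝ)) ^ ((1 : ℝ) / 2)

namespace PS

abbrev I01 : Set ℝ := Icc (0:ℝ) 1

lemma measurableSet_strip : MeasurableSet Strip :=
  MeasurableSet.univ.prod measurableSet_Icc

lemma strip_sub {x : ℝ × ℝ} (hx : x ∈ Strip) : x.2 ∈ I01 := hx.2

lemma restrict_strip :
    (volume : Measure (ℝ × ℝ)).restrict Strip
      = (volume : Measure ℝ).prod ((volume : Measure ℝ).restrict I01) := by
  rw [Measure.volume_eq_prod, Strip, ← Measure.prod_restrict, Measure.restrict_univ]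

lemma strip_integral (f : ℝ × ℝ → ℝ) (hf : IntegrableOn f Strip) :
    ∫ x in Strip, f x = ∫ x₁ : ℝ, ∫ t in I01, f (x₁, t) := by
  have : (∫ x in Strip, f x) = ∫ x, f x ∂((volume : Measure ℝ).prod ((volume : Measure ℝ).restrict I01)) := by
    rw [← restrict_strip]
  rw [this]
  exact MeasureTheory.integral_prod f (by rwa [← restrict_strip])

lemma strip_integral_mul (g h : ℝ → ℝ) :
    ∫ x in Strip, g x.1 * h x.2 = (∫ x₁ : ℝ, g x₁) * ∫ t in I01, h t := by
  have : (∫ x in Strip, g x.1 * h x.2)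
      = ∫ x, g x.1 * h x.2 ∂((volume : Measure ℝ).prod ((volume : Measure ℝ).restrict I01)) := by
    rw [← restrict_strip]
  rw [this]
  exact integral_prod_mul g h

lemma volume_I01 : (volume I01) = 1 := by
  simp [Real.volume_Icc]

lemma integral_fst_strip (g : ℝ → ℝ) :
    ∫ x in Strip, g x.1 = ∫ x₁ : ℝ, g x₁ := by
  have h := strip_integral_mul g (fun _ => (1:ℝ))
  simpa [volume_I01] using h

lemma hasDerivAt_snd {w : ℝ × ℝ → ℝ} (hw : ContDiff ℝ 1 w) (x₁ t : ℝ) :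
    HasDerivAt (fun s => w (x₁, s)) (pd2 w (x₁, t)) t := by
  have h1 : HasFDerivAt w (fderiv ℝ w (x₁, t)) (x₁, t) :=
    (hw.differentiable one_ne_zero (x₁, t)).hasFDerivAt
  have h2 : HasDerivAt (fun s : ℝ => ((x₁ : ℝ), s)) (((0:ℝ), (1:ℝ))) t :=
    (hasDerivAt_const t x₁).prodMk (hasDerivAt_id t)
  exact h1.comp_hasDerivAt t h2

lemma hasDerivAt_fst {w : ℝ × ℝ → ℝ} (hw : ContDiff ℝ 1 w) (t s : ℝ) :
    HasDerivAt (fun x₁ => w (x₁, t)) (pd1 w (s, t)) s := by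
  have h1 : HasFDerivAt w (fderiv ℝ w (s, t)) (s, t) :=
    (hw.differentiable one_ne_zero (s, t)).hasFDerivAt
  have h2 : HasDerivAt (fun x₁ : ℝ => (x₁, (t : ℝ))) (((1:ℝ), (0:ℝ))) s :=
    (hasDerivAt_id s).prodMk (hasDerivAt_const s t)
  exact h1.comp_hasDerivAt s h2

lemma continuous_pd1 {w : ℝ × ℝ → ℝ} (hw : ContDiff ℝ 1 w) : Continuous (pd1 w) :=
  (hw.continuous_fderiv one_ne_zero).clm_apply continuous_const

lemma continuous_pd2 {w : ℝ × ℝ → ℝ} (hw : ContDiff ℝ 1 w) : Continuous (pd2 w) :=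
  (hw.continuous_fderiv one_ne_zero).clm_apply continuous_const

lemma fderiv_vanish {w : ℝ × ℝ → ℝ} {r : ℝ} (h : ∀ x : ℝ × ℝ, r ≤ |x.1| → w x = 0)
    {x : ℝ × ℝ} (hx : r + 1 ≤ |x.1|) : fderiv ℝ w x = 0 := by
  have hopen : IsOpen {y : ℝ × ℝ | r < |y.1|} :=
    isOpen_lt continuous_const (continuous_abs.comp continuous_fst)
  have hmem : x ∈ {y : ℝ × ℝ | r < |y.1|} := by
    simp only [mem_setOf_eq]; linarith
  have hev : w =ᶠ[nhds x] (fun _ => (0:ℝ)) :=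
    Filter.eventuallyEq_of_mem (hopen.mem_nhds hmem) (fun y hy => h y (le_of_lt hy))
  rw [hev.fderiv_eq]
  simp

lemma pd1_vanish {w : ℝ × ℝ → ℝ} {r : ℝ} (h : ∀ x : ℝ × ℝ, r ≤ |x.1| → w x = 0)
    {x : ℝ × ℝ} (hx : r + 1 ≤ |x.1|) : pd1 w x = 0 := by
  rw [pd1, fderiv_vanish h hx]; rfl

lemma pd2_vanish {w : ℝ × ℝ → ℝ} {r : ℝ} (h : ∀ x : ℝ × ℝ, r ≤ |x.1| → w x = 0)
    {x : ℝ × ℝ} (hx : r + 1 ≤ |x.1|) : pd2 w x = 0 := by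
  rw [pd2, fderiv_vanish h hx]; rfl

/-- master integrability lemma on the strip -/
lemma integrableOn_strip_of_bounded {g : ℝ × ℝ → ℝ} {r M : ℝ}
    (hgm : StronglyMeasurable g)
    (hM : ∀ x ∈ Strip, |g x| ≤ M)
    (h0 : ∀ x : ℝ × ℝ, r ≤ |x.1| → g x = 0) : IntegrableOn g Strip := by
  set B : Set (ℝ × ℝ) := Icc (-|r|) |r| ×ˢ I01 with hB
  have hBmeas : MeasurableSet B := measurableSet_Icc.prod measurableSet_Icc
  have hBsub : Strip ⊆ B ∪ (Strip \ B) := by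
    intro x hx; by_cases h : x ∈ B
    · exact Or.inl h
    · exact Or.inr ⟨hx, h⟩
  have hBStrip : B ⊆ Strip := prod_mono (subset_univ _) subset_rfl
  refine IntegrableOn.mono_set (IntegrableOn.union ?_ ?_) hBsub
  · have hfin : volume B < ⊤ := (isCompact_Icc.prod isCompact_Icc).measure_lt_top
    refine Integrable.mono' ((integrableOn_const hfin.ne) : IntegrableOn (fun _ => M) B volume) hgm.aestronglyMeasurable.restrict ?_
    · filter_upwards [ae_restrict_mem hBmeas] with x hx
      exact (Real.norm_eq_abs _) ▸ hM x (hBStrip hx)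
  · rw [integrableOn_congr_fun (g := fun _ => (0:ℝ)) ?_ (measurableSet_strip.diff hBmeas)]
    · exact integrableOn_zero
    · intro x hx
      refine h0 x ?_
      have hx1 : x.1 ∉ Icc (-|r|) |r| := by
        intro hmem
        exact hx.2 ⟨hmem, hx.1.2⟩
      have h2 : ¬ (|x.1| ≤ |r|) := fun hc => hx1 (by rw [mem_Icc, ← abs_le]; exact hc)
      calc r ≤ |r| := le_abs_self r
      _ ≤ |x.1| := le_of_lt (not_le.mp h2)

lemma integrableOn_strip_of_continuous {g : ℝ × ℝ → ℝ} {r : ℝ}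
    (hg : Continuous g)
    (h0 : ∀ x : ℝ × ℝ, r ≤ |x.1| → g x = 0) : IntegrableOn g Strip := by
  obtain ⟨M, hM⟩ := (isCompact_Icc.prod isCompact_Icc).exists_bound_of_continuousOn
    (s := Icc (-|r|) |r| ×ˢ I01) hg.continuousOn
  refine integrableOn_strip_of_bounded (M := max M 0) hg.stronglyMeasurable ?_ h0
  intro x hx
  by_cases hx1 : |x.1| ≤ |r|
  · refine le_trans ?_ (le_max_left _ _)
    have := hM x ⟨by rw [mem_Icc]; constructor <;> [linarith [neg_abs_le x.1]; linarith [le_abs_self x.1]], hx.2⟩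
    simpa using this
  · rw [h0 x (le_trans (le_abs_self r) (le_of_lt (not_le.mp hx1)))]
    simp

lemma integrable_line_of_bounded {g : ℝ → ℝ} {r M : ℝ}
    (hgm : StronglyMeasurable g)
    (hM : ∀ x, |g x| ≤ M)
    (h0 : ∀ x : ℝ, r ≤ |x| → g x = 0) : Integrable g := by
  have hsub : (univ : Set ℝ) ⊆ Icc (-|r|) |r| ∪ ((Icc (-|r|) |r|)ᶜ) := by
    simp
  rw [← integrableOn_univ]
  refine IntegrableOn.mono_set (IntegrableOn.union ?_ ?_) hsub
  · refine Integrable.mono' ((integrableOn_const isCompact_Icc.measure_lt_top.ne) : IntegrableOn (fun _ => M) (Icc (-|r|) |r|) volume)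
      hgm.aestronglyMeasurable.restrict ?_
    exact Filter.Eventually.of_forall (fun x => (Real.norm_eq_abs _) ▸ hM x)
  · rw [integrableOn_congr_fun (g := fun _ => (0:ℝ)) ?_ measurableSet_Icc.compl]
    · exact integrableOn_zero
    · intro x hx
      refine h0 x ?_
      have h2 : ¬ (|x| ≤ |r|) := fun hc => hx (by rw [mem_Icc, ← abs_le]; exact hc)
      calc r ≤ |r| := le_abs_self r
      _ ≤ |x| := le_of_lt (not_le.mp h2)

lemma strip_integral_swap (f : ℝ × ℝ → ℝ) (hf : IntegrableOn f Strip) :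
    ∫ x in Strip, f x = ∫ t in I01, ∫ s : ℝ, f (s, t) := by
  have hf' : Integrable (f ∘ Prod.swap)
      (((volume : Measure ℝ).restrict I01).prod (volume : Measure ℝ)) :=
    integrable_swap_iff.2 (by rw [← restrict_strip]; exact hf)
  have : (∫ x in Strip, f x)
      = ∫ z, (f ∘ Prod.swap) z ∂(((volume : Measure ℝ).restrict I01).prod (volume : Measure ℝ)) := by
    rw [show (∫ z, (f ∘ Prod.swap) z ∂(((volume : Measure ℝ).restrict I01).prod (volume : Measure ℝ)))
        = ∫ z, f z.swap ∂(((volume : Measure ℝ).restrict I01).prod (volume : Measure ℝ)) from rfl,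
      integral_prod_swap f, ← restrict_strip]
  rw [this, MeasureTheory.integral_prod _ hf']
  rfl

/-- uniform bound on the strip for a continuous function vanishing for large `|x₁|` -/
lemma bound_on_strip {G : ℝ × ℝ → ℝ} (hG : Continuous G) {ρ : ℝ}
    (h0 : ∀ x : ℝ × ℝ, ρ ≤ |x.1| → G x = 0) :
    ∃ C, 0 ≤ C ∧ ∀ x ∈ Strip, |G x| ≤ C := by
  obtain ⟨M, hM⟩ := (isCompact_Icc.prod isCompact_Icc).exists_bound_of_continuousOn
    (s := Icc (-|ρ|) |ρ| ×ˢ I01) hG.continuousOn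
  refine ⟨max M 0, le_max_right _ _, ?_⟩
  intro x hx
  by_cases hx1 : |x.1| ≤ |ρ|
  · refine le_trans ?_ (le_max_left _ _)
    have := hM x ⟨by rw [mem_Icc, ← abs_le]; exact hx1, hx.2⟩
    simpa using this
  · rw [h0 x (le_trans (le_abs_self ρ) (le_of_lt (not_le.mp hx1)))]
    simp

lemma ftc_vert {w : ℝ × ℝ → ℝ} (hw : ContDiff ℝ 1 w) (x₁ τ t : ℝ) :
    ∫ s in τ..t, pd2 w (x₁, s) = w (x₁, t) - w (x₁, τ) :=
  intervalIntegral.integral_eq_sub_of_hasDerivAt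
    (fun s _ => hasDerivAt_snd hw x₁ s)
    (((continuous_pd2 hw).comp (continuous_const.prodMk continuous_id)).intervalIntegrable τ t)

lemma ftc_horiz {w : ℝ × ℝ → ℝ} (hw : ContDiff ℝ 1 w) (t a b : ℝ) :
    ∫ s in a..b, pd1 w (s, t) = w (b, t) - w (a, t) :=
  intervalIntegral.integral_eq_sub_of_hasDerivAt
    (fun s _ => hasDerivAt_fst hw t s)
    (((continuous_pd1 hw).comp (continuous_id.prodMk continuous_const)).intervalIntegrable a b)

lemma abs_intervalIntegral_le {f : ℝ → ℝ} (hf : Continuous f) {τ t a b : ℝ}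
    (hτ : τ ∈ Icc a b) (ht : t ∈ Icc a b) :
    |∫ s in τ..t, f s| ≤ ∫ s in Icc a b, |f s| := by
  calc |∫ s in τ..t, f s| ≤ ∫ s in Set.uIoc τ t, |f s| := by
        simpa [Real.norm_eq_abs] using
          intervalIntegral.norm_integral_le_integral_norm_uIoc (f := f) (a := τ) (b := t) (μ := volume)
  _ ≤ ∫ s in Icc a b, |f s| := by
      refine setIntegral_mono_set (hf.abs.continuousOn.integrableOn_compact isCompact_Icc) ?_ ?_
      · exact Filter.Eventually.of_forall (fun s => abs_nonneg _)
      · exact Filter.Eventually.of_forall <|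
          (uIoc_subset_uIcc).trans (uIcc_subset_Icc hτ ht)

lemma pointwise_vert {w : ℝ × ℝ → ℝ} (hw : ContDiff ℝ 1 w) {x₁ t τ : ℝ}
    (ht : t ∈ I01) (hτ : τ ∈ I01) :
    |w (x₁, t)| ≤ |w (x₁, τ)| + ∫ s in I01, |pd2 w (x₁, s)| := by
  have h1 := ftc_vert hw x₁ τ t
  have h2 : w (x₁, t) = w (x₁, τ) + ∫ s in τ..t, pd2 w (x₁, s) := by linarith
  rw [h2]
  refine le_trans (abs_add_le _ _) ?_
  gcongr
  exact abs_intervalIntegral_le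
    ((continuous_pd2 hw).comp (continuous_const.prodMk continuous_id)) hτ ht

lemma integral_I01_const_le {c : ℝ} {F : ℝ → ℝ} (hF : IntegrableOn F I01)
    (h : ∀ τ ∈ I01, c ≤ F τ) : c ≤ ∫ τ in I01, F τ := by
  have := setIntegral_ge_of_const_le (measurableSet_Icc) (by simp [volume_I01]) h hF
  simpa [volume_I01] using this

lemma integral_I01_pos {f : ℝ → ℝ} (hf : ContinuousOn f I01)
    (hpos : ∀ τ ∈ I01, 0 < f τ) : 0 < ∫ τ in I01, f τ := by
  obtain ⟨τm, hτm, hmin⟩ := isCompact_Icc.exists_isMinOn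
    (⟨0, by simp⟩ : (I01).Nonempty) hf
  have hm : 0 < f τm := hpos τm hτm
  have : f τm ≤ ∫ τ in I01, f τ :=
    integral_I01_const_le (hf.integrableOn_compact isCompact_Icc)
      (fun x hx => isMinOn_iff.mp hmin x hx)
  linarith

lemma exists_zero_of_mean_zero {f : ℝ → ℝ} (hf : ContinuousOn f I01)
    (h0 : ∫ τ in I01, f τ = 0) : ∃ τ ∈ I01, f τ = 0 := by
  by_contra hcon
  push_neg at hcon
  have h01 : (0:ℝ) ∈ I01 := by simp
  have key : (∀ τ ∈ I01, 0 < f τ) ∨ (∀ τ ∈ I01, f τ < 0) := by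
    rcases (hcon 0 h01).lt_or_gt with hneg | hpos
    · right
      intro τ hτ
      by_contra hge
      push_neg at hge
      have hgt : 0 < f τ := lt_of_le_of_ne hge (Ne.symm (hcon τ hτ))
      have hsub : Icc (0:ℝ) τ ⊆ I01 := Icc_subset_Icc le_rfl hτ.2
      have := intermediate_value_Icc hτ.1 (hf.mono hsub)
      have h0mem : (0:ℝ) ∈ Icc (f 0) (f τ) := ⟨le_of_lt hneg, le_of_lt hgt⟩
      obtain ⟨σ, hσ, hσ0⟩ := this h0mem
      exact hcon σ (hsub hσ) hσ0
    · left
      intro τ hτ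
      by_contra hge
      push_neg at hge
      have hlt : f τ < 0 := lt_of_le_of_ne hge (hcon τ hτ)
      have hsub : Icc (0:ℝ) τ ⊆ I01 := Icc_subset_Icc le_rfl hτ.2
      have := intermediate_value_Icc' hτ.1 (hf.mono hsub)
      have h0mem : (0:ℝ) ∈ Icc (f τ) (f 0) := ⟨le_of_lt hlt, le_of_lt hpos⟩
      obtain ⟨σ, hσ, hσ0⟩ := this h0mem
      exact hcon σ (hsub hσ) hσ0
  rcases key with hp | hn
  · have := integral_I01_pos hf hp
    rw [h0] at this
    exact lt_irrefl 0 this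
  · have := integral_I01_pos (f := fun τ => -f τ) (hf.neg) (fun τ hτ => by show 0 < -f τ; linarith [hn τ hτ])
    rw [integral_neg, h0] at this
    simp at this

/-- if `w` vanishes somewhere on each vertical segment, we get a pointwise bound -/
lemma pointwise_of_zero_at {w : ℝ × ℝ → ℝ} (hw : ContDiff ℝ 1 w) {x : ℝ × ℝ}
    (hx : x ∈ Strip) {τ : ℝ} (hτ : τ ∈ I01) (h0 : w (x.1, τ) = 0) :
    |w x| ≤ ∫ s in I01, |pd2 w (x.1, s)| := by
  have := pointwise_vert hw (x₁ := x.1) (strip_sub hx) hτ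
  rw [h0] at this
  simpa using this

/-- 1D Cauchy-Schwarz on the unit interval -/
lemma cs_I01 {f : ℝ → ℝ} (hf : ContinuousOn f I01) :
    (∫ s in I01, |f s|) ^ 2 ≤ ∫ s in I01, (f s) ^ 2 := by
  haveI : IsFiniteMeasure ((volume : Measure ℝ).restrict I01) :=
    ⟨by simp [Measure.restrict_apply_univ, volume_I01]⟩
  have hconj : (2:ℝ).HolderConjugate 2 := Real.HolderConjugate.two_two
  have hmf : MemLp f (ENNReal.ofReal 2) ((volume : Measure ℝ).restrict I01) := by
    rw [show ENNReal.ofReal (2:ℝ) = 2 by norm_num]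
    refine (memLp_two_iff_integrable_sq
      (hf.aestronglyMeasurable measurableSet_Icc)).2 ?_
    exact (hf.pow 2).integrableOn_compact isCompact_Icc
  have hm1 : MemLp (fun _ : ℝ => (1:ℝ)) (ENNReal.ofReal 2) ((volume : Measure ℝ).restrict I01) :=
    memLp_const 1
  have h := integral_mul_norm_le_Lp_mul_Lq hconj hmf hm1
  have e1 : (∫ s in I01, ‖f s‖ * ‖(1:ℝ)‖) = ∫ s in I01, |f s| := by
    simp [Real.norm_eq_abs]
  have e2 : (∫ s in I01, ‖f s‖ ^ (2:ℝ)) = ∫ s in I01, (f s) ^ 2 := by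
    refine setIntegral_congr_fun measurableSet_Icc (fun s _ => ?_)
    rw [Real.norm_eq_abs, show ((2:ℝ)) = ((2:ℕ):ℝ) by norm_num, Real.rpow_natCast, sq_abs]
  have e3 : (∫ s in I01, ‖(1:ℝ)‖ ^ (2:ℝ)) = 1 := by
    simp [Real.norm_eq_abs, Measure.restrict_apply_univ, volume_I01]
  rw [e1, e2, e3] at h
  have hB : (0:ℝ) ≤ ∫ s in I01, (f s) ^ 2 :=
    setIntegral_nonneg measurableSet_Icc (fun s _ => sq_nonneg _)
  have h' : (∫ s in I01, |f s|) ≤ (∫ s in I01, (f s) ^ 2) ^ ((1:ℝ)/2) := by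
    simpa using h
  calc (∫ s in I01, |f s|) ^ 2 ≤ ((∫ s in I01, (f s) ^ 2) ^ ((1:ℝ)/2)) ^ 2 := by
        refine pow_le_pow_left₀ (setIntegral_nonneg measurableSet_Icc (fun s _ => abs_nonneg _)) h' 2
  _ = ∫ s in I01, (f s) ^ 2 := by
        rw [← Real.rpow_natCast ((∫ s in I01, (f s) ^ 2) ^ ((1:ℝ)/2)) 2, ← Real.rpow_mul hB]
        norm_num

/-- integral over the vertical section -/
def colInt (G : ℝ × ℝ → ℝ) (x₁ : ℝ) : ℝ := ∫ s in I01, G (x₁, s)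

lemma colInt_sm {G : ℝ × ℝ → ℝ} (hG : Continuous G) : StronglyMeasurable (colInt G) :=
  StronglyMeasurable.integral_prod_right (f := fun x₁ s => G (x₁, s)) hG.stronglyMeasurable

lemma colInt_bound {G : ℝ × ℝ → ℝ} {C : ℝ} (hC : ∀ x ∈ Strip, |G x| ≤ C) (x₁ : ℝ) :
    |colInt G x₁| ≤ C := by
  haveI : IsFiniteMeasure ((volume : Measure ℝ).restrict I01) :=
    ⟨by simp [Measure.restrict_apply_univ, volume_I01]⟩
  have h := norm_integral_le_of_norm_le_const (μ := (volume : Measure ℝ).restrict I01)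
    (f := fun s => G (x₁, s)) (C := C) ?_
  · simpa [Real.norm_eq_abs, Measure.restrict_apply_univ, volume_I01, colInt] using h
  · filter_upwards [ae_restrict_mem measurableSet_Icc] with s hs
    exact (Real.norm_eq_abs _) ▸ hC (x₁, s) ⟨trivial, hs⟩

lemma colInt_vanish {G : ℝ × ℝ → ℝ} {r : ℝ} (h0 : ∀ x : ℝ × ℝ, r ≤ |x.1| → G x = 0)
    {x₁ : ℝ} (hx₁ : r ≤ |x₁|) : colInt G x₁ = 0 := by
  have : (fun s => G (x₁, s)) = fun _ => (0:ℝ) := funext (fun s => h0 (x₁, s) hx₁)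
  rw [colInt, this, integral_zero]

lemma colInt_nonneg {G : ℝ × ℝ → ℝ} (h : ∀ x, 0 ≤ G x) (x₁ : ℝ) : 0 ≤ colInt G x₁ :=
  setIntegral_nonneg measurableSet_Icc (fun s _ => h (x₁, s))

lemma colInt_integrable {G : ℝ × ℝ → ℝ} (hG : Continuous G) {r : ℝ}
    (h0 : ∀ x : ℝ × ℝ, r ≤ |x.1| → G x = 0) : Integrable (colInt G) := by
  obtain ⟨C, _, hC⟩ := bound_on_strip hG h0
  exact integrable_line_of_bounded (colInt_sm hG) (colInt_bound hC)
    (fun x₁ hx₁ => colInt_vanish h0 hx₁)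

lemma colInt_integral {G : ℝ × ℝ → ℝ} (hG : Continuous G) {r : ℝ}
    (h0 : ∀ x : ℝ × ℝ, r ≤ |x.1| → G x = 0) :
    ∫ x₁ : ℝ, colInt G x₁ = ∫ x in Strip, G x :=
  (strip_integral G (integrableOn_strip_of_continuous hG h0)).symm

lemma integrableOn_colInt_fst {G : ℝ × ℝ → ℝ} (hG : Continuous G) {r : ℝ}
    (h0 : ∀ x : ℝ × ℝ, r ≤ |x.1| → G x = 0) :
    IntegrableOn (fun x : ℝ × ℝ => colInt G x.1) Strip := by
  obtain ⟨C, _, hC⟩ := bound_on_strip hG h0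
  exact integrableOn_strip_of_bounded (r := r)
    ((colInt_sm hG).comp_measurable measurable_fst)
    (fun x _ => colInt_bound hC x.1)
    (fun x hx => colInt_vanish h0 hx)

lemma strip_mono_colInt {f G : ℝ × ℝ → ℝ} (hf : IntegrableOn f Strip)
    (hG : Continuous G) {r : ℝ} (h0G : ∀ x : ℝ × ℝ, r ≤ |x.1| → G x = 0)
    (hle : ∀ x ∈ Strip, f x ≤ colInt G x.1) :
    ∫ x in Strip, f x ≤ ∫ x in Strip, G x := by
  calc ∫ x in Strip, f x ≤ ∫ x in Strip, colInt G x.1 :=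
        setIntegral_mono_on hf (integrableOn_colInt_fst hG h0G) measurableSet_strip hle
  _ = ∫ x₁ : ℝ, colInt G x₁ := integral_fst_strip _
  _ = ∫ x in Strip, G x := colInt_integral hG h0G

/-- Poincaré inequality, given a pointwise vertical-derivative bound -/
lemma poincare_sq {v : ℝ × ℝ → ℝ} (hv : ContDiff ℝ 1 v) {r : ℝ}
    (h0 : ∀ x : ℝ × ℝ, r ≤ |x.1| → v x = 0)
    (hptw : ∀ x ∈ Strip, |v x| ≤ colInt (fun y => |pd2 v y|) x.1) :
    ∫ x in Strip, (v x) ^ 2 ≤ ∫ x in Strip, (pd2 v x) ^ 2 := by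
  have h0sq : ∀ x : ℝ × ℝ, r ≤ |x.1| → (v x) ^ 2 = 0 := fun x hx => by rw [h0 x hx]; ring
  have h0d : ∀ x : ℝ × ℝ, (r + 1) ≤ |x.1| → (pd2 v x) ^ 2 = 0 :=
    fun x hx => by rw [pd2_vanish (fun y hy => h0 y hy) hx]; ring
  refine strip_mono_colInt (integrableOn_strip_of_continuous (hv.continuous.pow 2) h0sq)
    ((continuous_pd2 hv).pow 2) h0d ?_
  intro x hx
  have h1 : (v x) ^ 2 ≤ (colInt (fun y => |pd2 v y|) x.1) ^ 2 := by
    rw [← sq_abs]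
    exact pow_le_pow_left₀ (abs_nonneg _) (hptw x hx) 2
  refine le_trans h1 ?_
  exact cs_I01 ((continuous_pd2 hv).comp (continuous_const.prodMk continuous_id)).continuousOn

/-- the vertical mean of `u1` vanishes -/
lemma mean_zero_u1 {u1 u2 : ℝ × ℝ → ℝ} (h1 : ContDiff ℝ 1 u1) (h2 : ContDiff ℝ 1 u2)
    {r : ℝ} (hr : ∀ x : ℝ × ℝ, r ≤ |x.1| → u1 x = 0)
    (hdiv : ∀ x ∈ Strip, pd1 u1 x + pd2 u2 x = 0)
    (hbc : ∀ x₁ : ℝ, u2 (x₁, 0) = 0 ∧ u2 (x₁, 1) = 0) (b : ℝ) :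
    colInt u1 b = 0 := by
  set a : ℝ := -(|r| + |b| + 1) with ha
  have hab : a ≤ b := by
    have := neg_abs_le b
    have := abs_nonneg r
    simp only [ha]; linarith
  have hra : r ≤ |a| := by
    have h1' : |a| = |r| + |b| + 1 := by
      rw [ha, abs_neg, abs_of_nonneg]; positivity
    rw [h1']; linarith [le_abs_self r, abs_nonneg b]
  have hval : ∀ t : ℝ, u1 (b, t) = ∫ s in Set.Ioc a b, pd1 u1 (s, t) := by
    intro t
    have := ftc_horiz h1 t a b
    rw [intervalIntegral.integral_of_le hab] at this
    rw [this, hr (a, t) hra, sub_zero]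
  have step1 : colInt u1 b = ∫ t in I01, ∫ s in Set.Ioc a b, pd1 u1 (s, t) := by
    rw [colInt]
    exact setIntegral_congr_fun measurableSet_Icc (fun t _ => hval t)
  have hint : Integrable (Function.uncurry (fun t s => pd1 u1 (s, t)))
      (((volume : Measure ℝ).restrict I01).prod ((volume : Measure ℝ).restrict (Set.Ioc a b))) := by
    rw [Measure.prod_restrict]
    have hc : Continuous (fun p : ℝ × ℝ => pd1 u1 (p.2, p.1)) :=
      (continuous_pd1 h1).comp (continuous_snd.prodMk continuous_fst)
    have : IntegrableOn (fun p : ℝ × ℝ => pd1 u1 (p.2, p.1)) (I01 ×ˢ Icc a b) :=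
      hc.continuousOn.integrableOn_compact (isCompact_Icc.prod isCompact_Icc)
    exact (this.mono_set (prod_mono subset_rfl Set.Ioc_subset_Icc_self))
  have step2 : (∫ t in I01, ∫ s in Set.Ioc a b, pd1 u1 (s, t))
      = ∫ s in Set.Ioc a b, ∫ t in I01, pd1 u1 (s, t) :=
    integral_integral_swap hint
  have step3 : ∀ s : ℝ, (∫ t in I01, pd1 u1 (s, t)) = 0 := by
    intro s
    have e1 : (∫ t in I01, pd1 u1 (s, t)) = ∫ t in I01, -pd2 u2 (s, t) := by
      refine setIntegral_congr_fun measurableSet_Icc (fun t ht => ?_)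
      have := hdiv (s, t) ⟨trivial, ht⟩
      linarith
    have e2 : (∫ t in I01, pd2 u2 (s, t)) = ∫ t in (0:ℝ)..1, pd2 u2 (s, t) := by
      rw [intervalIntegral.integral_of_le (by norm_num : (0:ℝ) ≤ 1)]
      exact integral_Icc_eq_integral_Ioc
    rw [e1, integral_neg, e2, ftc_vert h2 s 0 1, (hbc s).1, (hbc s).2]
    simp
  rw [step1, step2]
  calc (∫ s in Set.Ioc a b, ∫ t in I01, pd1 u1 (s, t))
      = ∫ s in Set.Ioc a b, (0:ℝ) := setIntegral_congr_fun measurableSet_Ioc (fun s _ => step3 s)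
  _ = 0 := integral_zero _ _

lemma integrable_line_of_continuous {g : ℝ → ℝ} (hg : Continuous g) {r : ℝ}
    (h0 : ∀ x : ℝ, r ≤ |x| → g x = 0) : Integrable g := by
  refine hg.integrable_of_hasCompactSupport (HasCompactSupport.intro (K := Icc (-|r|) |r|) isCompact_Icc ?_)
  intro x hx
  refine h0 x ?_
  have h2 : ¬ (|x| ≤ |r|) := fun hc => hx (by rw [mem_Icc, ← abs_le]; exact hc)
  calc r ≤ |r| := le_abs_self r
  _ ≤ |x| := le_of_lt (not_le.mp h2)

/-- integral over a horizontal line -/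
def rowInt (G : ℝ × ℝ → ℝ) (t : ℝ) : ℝ := ∫ s : ℝ, G (s, t)

lemma rowInt_sm {G : ℝ × ℝ → ℝ} (hG : Continuous G) : StronglyMeasurable (rowInt G) :=
  StronglyMeasurable.integral_prod_right (f := fun t s => G (s, t))
    (hG.comp (continuous_snd.prodMk continuous_fst)).stronglyMeasurable

/-- Gagliardo–Nirenberg type `L¹` inequality on the strip -/
lemma gns_strip {w : ℝ × ℝ → ℝ} (hw : ContDiff ℝ 1 w) {ρ : ℝ}
    (h0 : ∀ x : ℝ × ℝ, ρ ≤ |x.1| → w x = 0) :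
    ∫ x in Strip, (w x) ^ 2
      ≤ (∫ x in Strip, (|w x| + |pd2 w x|)) * (∫ x in Strip, |pd1 w x|) := by
  -- the two auxiliary functions
  set G1 : ℝ × ℝ → ℝ := fun y => |w y| + |pd2 w y| with hG1
  set G2 : ℝ × ℝ → ℝ := fun y => |pd1 w y| with hG2
  have hG1c : Continuous G1 := (hw.continuous.abs).add (continuous_pd2 hw).abs
  have hG2c : Continuous G2 := (continuous_pd1 hw).abs
  have hG1v : ∀ x : ℝ × ℝ, ρ + 1 ≤ |x.1| → G1 x = 0 := by
    intro x hx
    rw [hG1]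
    simp only []
    rw [h0 x (by linarith), pd2_vanish h0 hx]
    simp
  have hG2v : ∀ x : ℝ × ℝ, ρ + 1 ≤ |x.1| → G2 x = 0 := by
    intro x hx
    rw [hG2]; simp only []
    rw [pd1_vanish h0 hx]; simp
  set P : ℝ → ℝ := colInt G1 with hP
  set Q : ℝ → ℝ := rowInt G2 with hQ
  -- pointwise bound (i): |w x| ≤ P x.1
  have hi : ∀ x ∈ Strip, |w x| ≤ P x.1 := by
    intro x hx
    have hF : ∀ τ ∈ I01, |w x| ≤ |w (x.1, τ)| + colInt (fun y => |pd2 w y|) x.1 := by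
      intro τ hτ
      have := pointwise_vert hw (x₁ := x.1) (strip_sub hx) hτ
      simpa [colInt] using this
    have hadd : P x.1 = (∫ τ in I01, |w (x.1, τ)|) + colInt (fun y => |pd2 w y|) x.1 := by
      rw [hP, colInt, hG1]
      rw [integral_add]
      · rfl
      · exact (hw.continuous.abs.comp (continuous_const.prodMk continuous_id)).continuousOn.integrableOn_compact isCompact_Icc
      · exact ((continuous_pd2 hw).abs.comp (continuous_const.prodMk continuous_id)).continuousOn.integrableOn_compact isCompact_Icc
    rw [hadd]
    have : |w x| ≤ ∫ τ in I01, (|w (x.1, τ)| + colInt (fun y => |pd2 w y|) x.1) := by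
      refine integral_I01_const_le ?_ hF
      refine Integrable.add ?_ (integrable_const _)
      exact (hw.continuous.abs.comp (continuous_const.prodMk continuous_id)).continuousOn.integrableOn_compact isCompact_Icc
    refine le_trans this (le_of_eq ?_)
    rw [integral_add]
    · simp [Measure.restrict_apply_univ, volume_I01]
    · exact (hw.continuous.abs.comp (continuous_const.prodMk continuous_id)).continuousOn.integrableOn_compact isCompact_Icc
    · exact integrable_const _
  -- pointwise bound (ii): |w x| ≤ Q x.2
  have hQint : ∀ t : ℝ, Integrable (fun s => G2 (s, t)) := by
    intro t
    refine integrable_line_of_continuous (hG2c.comp (continuous_id.prodMk continuous_const)) (r := ρ + 1) ?_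
    intro s hs
    exact hG2v (s, t) hs
  have hQnn : ∀ t, 0 ≤ Q t := fun t =>
    integral_nonneg (fun s => abs_nonneg _)
  have hii : ∀ x ∈ Strip, |w x| ≤ Q x.2 := by
    intro x hx
    by_cases hx1 : |x.1| ≤ |ρ| + 1
    · set a : ℝ := -(|ρ| + 1) with haa
      have hwa : w (a, x.2) = 0 := h0 _ (by
        simp only [haa]
        rw [abs_neg, abs_of_nonneg (by positivity)]
        linarith [le_abs_self ρ])
      have hftc := ftc_horiz hw x.2 a x.1
      rw [hwa, sub_zero] at hftc
      have habs : |w (x.1, x.2)| ≤ ∫ s in Icc (-(|ρ|+1)) (|ρ|+1), |pd1 w (s, x.2)| := by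
        rw [← hftc]
        refine abs_intervalIntegral_le ((continuous_pd1 hw).comp (continuous_id.prodMk continuous_const)) ?_ ?_
        · constructor
          · simp [haa]
          · simp only [haa]; linarith [abs_nonneg ρ]
        · rw [mem_Icc, ← abs_le]; exact hx1
      calc |w x| = |w (x.1, x.2)| := by rfl
      _ ≤ ∫ s in Icc (-(|ρ|+1)) (|ρ|+1), |pd1 w (s, x.2)| := habs
      _ ≤ ∫ s : ℝ, |pd1 w (s, x.2)| := by
          refine setIntegral_le_integral (hQint x.2) ?_
          exact Filter.Eventually.of_forall (fun s => abs_nonneg _)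
      _ = Q x.2 := rfl
    · rw [h0 x (le_trans (le_abs_self ρ) (by linarith [not_le.mp hx1]))]
      simpa using hQnn x.2
  -- pointwise product bound
  have hprod : ∀ x ∈ Strip, (w x) ^ 2 ≤ P x.1 * Q x.2 := by
    intro x hx
    have hPnn : 0 ≤ |w x| := abs_nonneg _
    calc (w x) ^ 2 = |w x| * |w x| := by rw [← sq_abs]; ring
    _ ≤ P x.1 * Q x.2 := mul_le_mul (hi x hx) (hii x hx) hPnn
        (le_trans hPnn (hi x hx))
  -- bounds for integrability of the product
  obtain ⟨C1, hC1nn, hC1⟩ := bound_on_strip hG1c hG1v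
  obtain ⟨C2, hC2nn, hC2⟩ := bound_on_strip hG2c hG2v
  have hQbd : ∀ t ∈ I01, |Q t| ≤ C2 * (2 * (|ρ| + 1) + 2) := by
    intro t ht
    have hzero : ∀ s ∉ Icc (-(|ρ|+2)) (|ρ|+2), G2 (s, t) = 0 := by
      intro s hs
      refine hG2v (s, t) ?_
      have h2 : ¬ (|s| ≤ |ρ| + 2) := fun hc => hs (by rw [mem_Icc, ← abs_le]; exact hc)
      calc ρ + 1 ≤ |ρ| + 2 := by linarith [le_abs_self ρ]
      _ ≤ |s| := le_of_lt (not_le.mp h2)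
    have : Q t = ∫ s in Icc (-(|ρ|+2)) (|ρ|+2), G2 (s, t) :=
      (setIntegral_eq_integral_of_forall_compl_eq_zero hzero).symm
    rw [this]
    haveI : IsFiniteMeasure ((volume : Measure ℝ).restrict (Icc (-(|ρ|+2)) (|ρ|+2))) :=
      ⟨by rw [Measure.restrict_apply_univ]; exact isCompact_Icc.measure_lt_top⟩
    have h := norm_integral_le_of_norm_le_const
      (μ := (volume : Measure ℝ).restrict (Icc (-(|ρ|+2)) (|ρ|+2)))
      (f := fun s => G2 (s, t)) (C := C2) ?_
    · have hvol : ((volume : Measure ℝ).restrict (Icc (-(|ρ|+2)) (|ρ|+2))).real univ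
          = 2 * (|ρ| + 1) + 2 := by
        rw [measureReal_def, Measure.restrict_apply_univ, Real.volume_Icc, ENNReal.toReal_ofReal (by linarith [abs_nonneg ρ])]
        ring
      rw [Real.norm_eq_abs, hvol] at h
      exact h
    · filter_upwards [ae_restrict_mem measurableSet_Icc] with s _
      exact (Real.norm_eq_abs _) ▸ hC2 (s, t) ⟨trivial, ht⟩
  -- integrability of the product over the strip
  have hPQ : IntegrableOn (fun x : ℝ × ℝ => P x.1 * Q x.2) Strip := by
    refine integrableOn_strip_of_bounded (r := |ρ| + 2) (M := C1 * (C2 * (2 * (|ρ| + 1) + 2)))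
      (((colInt_sm hG1c).comp_measurable measurable_fst).mul
        ((rowInt_sm hG2c).comp_measurable measurable_snd)) ?_ ?_
    · intro x hx
      rw [abs_mul]
      refine mul_le_mul (colInt_bound hC1 x.1) (hQbd x.2 hx.2) (abs_nonneg _) ?_
      exact le_trans (abs_nonneg _) (colInt_bound hC1 x.1)
    · intro x hx
      have : P x.1 = 0 := colInt_vanish hG1v (by linarith [le_abs_self ρ, abs_nonneg ρ, hx] : ρ + 1 ≤ |x.1|)
      rw [this, zero_mul]
  -- assemble
  have hmono : ∫ x in Strip, (w x) ^ 2 ≤ ∫ x in Strip, P x.1 * Q x.2 := by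
    refine setIntegral_mono_on ?_ hPQ measurableSet_strip hprod
    refine integrableOn_strip_of_continuous (hw.continuous.pow 2) (r := ρ) ?_
    intro x hx
    rw [h0 x hx]; ring
  have hsplit : (∫ x in Strip, P x.1 * Q x.2) = (∫ x₁ : ℝ, P x₁) * ∫ t in I01, Q t :=
    strip_integral_mul P Q
  have hPint : (∫ x₁ : ℝ, P x₁) = ∫ x in Strip, G1 x := colInt_integral hG1c hG1v
  have hQint2 : (∫ t in I01, Q t) = ∫ x in Strip, G2 x := by
    rw [strip_integral_swap G2 (integrableOn_strip_of_continuous hG2c hG2v)]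
    rfl
  calc ∫ x in Strip, (w x) ^ 2 ≤ ∫ x in Strip, P x.1 * Q x.2 := hmono
  _ = (∫ x in Strip, G1 x) * ∫ x in Strip, G2 x := by rw [hsplit, hPint, hQint2]
  _ = (∫ x in Strip, (|w x| + |pd2 w x|)) * (∫ x in Strip, |pd1 w x|) := rfl

lemma abs_pow_even (a : ℝ) (k : ℕ) : |a| ^ (2*k) = a ^ (2*k) := by
  rw [pow_mul, pow_mul, sq_abs]

lemma half_mul_self {T : ℝ} (hT : 0 ≤ T) :
    (T ^ ((1:ℝ)/2)) * (T ^ ((1:ℝ)/2)) = T := by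
  rw [← Real.sqrt_eq_rpow, Real.mul_self_sqrt hT]

lemma pd1_pow {v : ℝ × ℝ → ℝ} (hv : ContDiff ℝ 1 v) (n : ℕ) (x : ℝ × ℝ) :
    pd1 (fun y => v y ^ (n+1)) x = ((n:ℝ)+1) * v x ^ n * pd1 v x := by
  have hD := (hv.differentiable one_ne_zero x).hasFDerivAt
  have hd : HasDerivAt (fun z : ℝ => z ^ (n+1)) (((n:ℝ)+1) * v x ^ n) (v x) := by
    simpa using hasDerivAt_pow (n+1) (v x)
  have hcomp := hd.comp_hasFDerivAt x hD
  have : fderiv ℝ (fun y => v y ^ (n+1)) x = (((n:ℝ)+1) * v x ^ n) • fderiv ℝ v x :=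
    hcomp.fderiv
  rw [pd1, this]
  simp [pd1, mul_assoc]

lemma pd2_pow {v : ℝ × ℝ → ℝ} (hv : ContDiff ℝ 1 v) (n : ℕ) (x : ℝ × ℝ) :
    pd2 (fun y => v y ^ (n+1)) x = ((n:ℝ)+1) * v x ^ n * pd2 v x := by
  have hD := (hv.differentiable one_ne_zero x).hasFDerivAt
  have hd : HasDerivAt (fun z : ℝ => z ^ (n+1)) (((n:ℝ)+1) * v x ^ n) (v x) := by
    simpa using hasDerivAt_pow (n+1) (v x)
  have hcomp := hd.comp_hasFDerivAt x hD
  have : fderiv ℝ (fun y => v y ^ (n+1)) x = (((n:ℝ)+1) * v x ^ n) • fderiv ℝ v x :=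
    hcomp.fderiv
  rw [pd2, this]
  simp [pd2, mul_assoc]

/-- Cauchy–Schwarz on the strip -/
lemma cs_strip {f g : ℝ × ℝ → ℝ} (hf : Continuous f) (hg : Continuous g) {r : ℝ}
    (hf0 : ∀ x : ℝ × ℝ, r ≤ |x.1| → f x = 0) (hg0 : ∀ x : ℝ × ℝ, r ≤ |x.1| → g x = 0) :
    ∫ x in Strip, |f x| * |g x|
      ≤ (∫ x in Strip, (f x) ^ 2) ^ ((1:ℝ)/2) * (∫ x in Strip, (g x) ^ 2) ^ ((1:ℝ)/2) := by
  have hconj : (2:ℝ).HolderConjugate 2 := Real.HolderConjugate.two_two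
  have hmf : MemLp f (ENNReal.ofReal 2) ((volume : Measure (ℝ × ℝ)).restrict Strip) := by
    rw [show ENNReal.ofReal (2:ℝ) = 2 by norm_num]
    refine (memLp_two_iff_integrable_sq hf.aestronglyMeasurable.restrict).2 ?_
    exact integrableOn_strip_of_continuous (hf.pow 2) (r := r)
      (fun x hx => by rw [hf0 x hx]; ring)
  have hmg : MemLp g (ENNReal.ofReal 2) ((volume : Measure (ℝ × ℝ)).restrict Strip) := by
    rw [show ENNReal.ofReal (2:ℝ) = 2 by norm_num]
    refine (memLp_two_iff_integrable_sq hg.aestronglyMeasurable.restrict).2 ?_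
    exact integrableOn_strip_of_continuous (hg.pow 2) (r := r)
      (fun x hx => by rw [hg0 x hx]; ring)
  have h := integral_mul_norm_le_Lp_mul_Lq hconj hmf hmg
  have e2 : ∀ (F : ℝ × ℝ → ℝ), (∫ x in Strip, ‖F x‖ ^ (2:ℝ)) = ∫ x in Strip, (F x) ^ 2 := by
    intro F
    refine setIntegral_congr_fun measurableSet_strip (fun x _ => ?_)
    rw [Real.norm_eq_abs, show ((2:ℝ)) = ((2:ℕ):ℝ) by norm_num, Real.rpow_natCast, sq_abs]
  rw [e2, e2] at h
  simpa [Real.norm_eq_abs] using h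

/-- the recursive constants -/
def Kc : ℕ → ℝ
  | 0 => 1
  | Nat.succ n => ((n:ℝ)+2) * ((n:ℝ)+1) * Kc n

lemma Kc_ge_one : ∀ n, (1:ℝ) ≤ Kc n := by
  intro n
  induction n with
  | zero => simp [Kc]
  | succ n ih =>
    have h1 : (1:ℝ) ≤ ((n:ℝ)+2) * ((n:ℝ)+1) := by nlinarith [Nat.cast_nonneg (α := ℝ) n]
    calc (1:ℝ) = 1 * 1 := by ring
    _ ≤ (((n:ℝ)+2) * ((n:ℝ)+1)) * Kc n := by
        exact mul_le_mul h1 ih (by norm_num) (by linarith)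
    _ = Kc (n+1) := rfl

section Recurrence

variable {v : ℝ × ℝ → ℝ} {r : ℝ}

/-- key recurrence: moment of order `2(n+1)` bounded via moment of order `2n` -/
lemma moment_step (hv : ContDiff ℝ 1 v)
    (h0 : ∀ x : ℝ × ℝ, r ≤ |x.1| → v x = 0)
    (ha : ∫ x in Strip, (v x) ^ 2 ≤ 1)
    (hb : ∫ x in Strip, (pd1 v x) ^ 2 ≤ 1)
    (hc : ∫ x in Strip, (pd2 v x) ^ 2 ≤ 1) (n : ℕ) (hn : 1 ≤ n) :
    ∫ x in Strip, |v x| ^ (2*(n+1))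
      ≤ ((n:ℝ)+2) * ((n:ℝ)+1) * ∫ x in Strip, |v x| ^ (2*n) := by
  set w : ℝ × ℝ → ℝ := fun y => v y ^ (n+1) with hwdef
  have hwC : ContDiff ℝ 1 w := hv.pow (n+1)
  have hw0 : ∀ x : ℝ × ℝ, r ≤ |x.1| → w x = 0 := by
    intro x hx; rw [hwdef]; simp only []; rw [h0 x hx]
    exact zero_pow (Nat.succ_ne_zero n)
  set T : ℝ := ∫ x in Strip, |v x| ^ (2*n) with hTdef
  have hTnn : 0 ≤ T :=
    setIntegral_nonneg measurableSet_strip (fun x _ => pow_nonneg (abs_nonneg _) _)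
  set S : ℝ := T ^ ((1:ℝ)/2) with hSdef
  have hSnn : 0 ≤ S := Real.rpow_nonneg hTnn _
  have hvn : Continuous (fun x : ℝ × ℝ => v x ^ n) := hv.continuous.pow n
  have hvn0 : ∀ x : ℝ × ℝ, r + 1 ≤ |x.1| → v x ^ n = 0 := by
    intro x hx
    rw [h0 x (by linarith)]
    exact zero_pow (by omega)
  have hpt : ∀ (c : ℝ) (m : ℕ), |c| ^ (2*m) = (c ^ m) ^ 2 := fun c m => by
    rw [abs_pow_even, Nat.mul_comm 2 m, pow_mul]
  -- (v^n)^2 integral equals T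
  have hTalt : ∫ x in Strip, ((fun x : ℝ × ℝ => v x ^ n) x) ^ 2 = T := by
    rw [hTdef]
    refine setIntegral_congr_fun measurableSet_strip (fun x _ => ?_)
    exact (hpt (v x) n).symm
  have hsq1 : (∫ x in Strip, (v x) ^ 2) ^ ((1:ℝ)/2) ≤ 1 :=
    Real.rpow_le_one (setIntegral_nonneg measurableSet_strip (fun x _ => sq_nonneg _)) ha
      (by norm_num)
  have hsqb : (∫ x in Strip, (pd1 v x) ^ 2) ^ ((1:ℝ)/2) ≤ 1 :=
    Real.rpow_le_one (setIntegral_nonneg measurableSet_strip (fun x _ => sq_nonneg _)) hb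
      (by norm_num)
  have hsqc : (∫ x in Strip, (pd2 v x) ^ 2) ^ ((1:ℝ)/2) ≤ 1 :=
    Real.rpow_le_one (setIntegral_nonneg measurableSet_strip (fun x _ => sq_nonneg _)) hc
      (by norm_num)
  -- estimate E1 : ∫ |w| ≤ S
  have hE1 : ∫ x in Strip, |w x| ≤ S := by
    have hcongr : ∫ x in Strip, |w x|
        = ∫ x in Strip, |(fun x : ℝ × ℝ => v x ^ n) x| * |v x| := by
      refine setIntegral_congr_fun measurableSet_strip (fun x _ => ?_)
      rw [hwdef]; simp only []
      rw [pow_succ, abs_mul]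
    rw [hcongr]
    have hcs := cs_strip hvn hv.continuous (r := r + 1) hvn0
      (fun x hx => h0 x (by linarith))
    rw [hTalt] at hcs
    calc (∫ x in Strip, |(fun x : ℝ × ℝ => v x ^ n) x| * |v x|)
        ≤ S * (∫ x in Strip, (v x) ^ 2) ^ ((1:ℝ)/2) := hcs
    _ ≤ S := mul_le_of_le_one_right hSnn hsq1
  -- estimate E2 : ∫ |pd2 w| ≤ (n+1) S
  have hE2 : ∫ x in Strip, |pd2 w x| ≤ ((n:ℝ)+1) * S := by
    have hcongr : ∫ x in Strip, |pd2 w x|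
        = ∫ x in Strip, ((n:ℝ)+1) * (|(fun x : ℝ × ℝ => v x ^ n) x| * |pd2 v x|) := by
      refine setIntegral_congr_fun measurableSet_strip (fun x _ => ?_)
      rw [hwdef, pd2_pow hv n x, abs_mul, abs_mul, abs_of_nonneg (by positivity : (0:ℝ) ≤ (n:ℝ)+1), mul_assoc]
    rw [hcongr, integral_const_mul]
    have hcs := cs_strip hvn (continuous_pd2 hv) (r := r + 1) hvn0
      (fun x hx => pd2_vanish h0 hx)
    rw [hTalt] at hcs
    have : (∫ x in Strip, |(fun x : ℝ × ℝ => v x ^ n) x| * |pd2 v x|) ≤ S :=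
      le_trans hcs (mul_le_of_le_one_right hSnn hsqc)
    exact mul_le_mul_of_nonneg_left this (by positivity)
  -- estimate E3 : ∫ |pd1 w| ≤ (n+1) S
  have hE3 : ∫ x in Strip, |pd1 w x| ≤ ((n:ℝ)+1) * S := by
    have hcongr : ∫ x in Strip, |pd1 w x|
        = ∫ x in Strip, ((n:ℝ)+1) * (|(fun x : ℝ × ℝ => v x ^ n) x| * |pd1 v x|) := by
      refine setIntegral_congr_fun measurableSet_strip (fun x _ => ?_)
      rw [hwdef, pd1_pow hv n x, abs_mul, abs_mul, abs_of_nonneg (by positivity : (0:ℝ) ≤ (n:ℝ)+1), mul_assoc]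
    rw [hcongr, integral_const_mul]
    have hcs := cs_strip hvn (continuous_pd1 hv) (r := r + 1) hvn0
      (fun x hx => pd1_vanish h0 hx)
    rw [hTalt] at hcs
    have : (∫ x in Strip, |(fun x : ℝ × ℝ => v x ^ n) x| * |pd1 v x|) ≤ S :=
      le_trans hcs (mul_le_of_le_one_right hSnn hsqb)
    exact mul_le_mul_of_nonneg_left this (by positivity)
  -- integrability for splitting the sum
  have hIw : IntegrableOn (fun x : ℝ × ℝ => |w x|) Strip :=
    integrableOn_strip_of_continuous hwC.continuous.abs (r := r)
      (fun x hx => by rw [hw0 x hx]; simp)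
  have hIpd2w : IntegrableOn (fun x : ℝ × ℝ => |pd2 w x|) Strip :=
    integrableOn_strip_of_continuous (continuous_pd2 hwC).abs (r := r + 1)
      (fun x hx => by rw [pd2_vanish hw0 hx]; simp)
  have hsum : (∫ x in Strip, (|w x| + |pd2 w x|)) ≤ ((n:ℝ)+2) * S := by
    rw [integral_add hIw hIpd2w]
    calc (∫ x in Strip, |w x|) + ∫ x in Strip, |pd2 w x|
        ≤ S + ((n:ℝ)+1) * S := add_le_add hE1 hE2
    _ = ((n:ℝ)+2) * S := by ring
  have hBnn : 0 ≤ ∫ x in Strip, |pd1 w x| :=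
    setIntegral_nonneg measurableSet_strip (fun x _ => abs_nonneg _)
  have hfinal := gns_strip hwC hw0
  have hLHS : ∫ x in Strip, (w x) ^ 2 = ∫ x in Strip, |v x| ^ (2*(n+1)) := by
    refine setIntegral_congr_fun measurableSet_strip (fun x _ => ?_)
    rw [hwdef]; simp only []
    exact (hpt (v x) (n+1)).symm
  calc ∫ x in Strip, |v x| ^ (2*(n+1)) = ∫ x in Strip, (w x) ^ 2 := hLHS.symm
  _ ≤ (∫ x in Strip, (|w x| + |pd2 w x|)) * ∫ x in Strip, |pd1 w x| := hfinal
  _ ≤ (((n:ℝ)+2) * S) * (((n:ℝ)+1) * S) :=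
      mul_le_mul hsum hE3 hBnn (by positivity)
  _ = ((n:ℝ)+2) * ((n:ℝ)+1) * (S * S) := by ring
  _ = ((n:ℝ)+2) * ((n:ℝ)+1) * T := by rw [half_mul_self hTnn]

/-- all even moments are bounded -/
lemma moments (hv : ContDiff ℝ 1 v)
    (h0 : ∀ x : ℝ × ℝ, r ≤ |x.1| → v x = 0)
    (ha : ∫ x in Strip, (v x) ^ 2 ≤ 1)
    (hb : ∫ x in Strip, (pd1 v x) ^ 2 ≤ 1)
    (hc : ∫ x in Strip, (pd2 v x) ^ 2 ≤ 1) :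
    ∀ n : ℕ, 1 ≤ n → ∫ x in Strip, |v x| ^ (2*n) ≤ Kc n := by
  intro n hn
  induction n with
  | zero => omega
  | succ n ih =>
    rcases Nat.eq_zero_or_pos n with h | h
    · subst h
      have : ∫ x in Strip, |v x| ^ (2*1) = ∫ x in Strip, (v x) ^ 2 := by
        refine setIntegral_congr_fun measurableSet_strip (fun x _ => ?_)
        rw [show 2*1 = 2*1 from rfl, abs_pow_even]
      rw [this]
      exact le_trans ha (Kc_ge_one 1)
    · have hKn := ih h
      have hstep := moment_step hv h0 ha hb hc n h
      calc ∫ x in Strip, |v x| ^ (2*(n+1))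
          ≤ ((n:ℝ)+2) * ((n:ℝ)+1) * ∫ x in Strip, |v x| ^ (2*n) := hstep
      _ ≤ ((n:ℝ)+2) * ((n:ℝ)+1) * Kc n := by
          refine mul_le_mul_of_nonneg_left hKn (by positivity)
      _ = Kc (n+1) := rfl

end Recurrence

def lqNorm' (q : ℝ) (Ω : Set (ℝ × ℝ)) (f : ℝ × ℝ → ℝ) : ℝ :=
  (∫ x in Ω, |f x| ^ q) ^ (1 / q)

lemma rpow_interp {c q : ℝ} (hq2 : 2 ≤ q) {n : ℕ} (hn : 1 ≤ n) (hqn : q ≤ 2*(n:ℝ)) :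
    |c| ^ q ≤ c ^ 2 + c ^ (2*n) := by
  have h2n : c ^ (2*n) = |c| ^ (2*n) := (abs_pow_even c n).symm
  by_cases hc : c = 0
  · subst hc
    rw [abs_zero, Real.zero_rpow (by linarith : q ≠ 0)]
    rw [zero_pow (by norm_num : (2:ℕ) ≠ 0), zero_pow (by omega : 2*n ≠ 0)]
    norm_num
  · have hpos : 0 < |c| := abs_pos.mpr hc
    by_cases h1 : |c| ≤ 1
    · calc |c| ^ q ≤ |c| ^ (2:ℝ) := Real.rpow_le_rpow_of_exponent_ge hpos h1 hq2
      _ = c ^ 2 := by rw [Real.rpow_two, sq_abs]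
      _ ≤ c ^ 2 + c ^ (2*n) := by
          rw [h2n]; exact le_add_of_nonneg_right (by positivity)
    · push_neg at h1
      calc |c| ^ q ≤ |c| ^ (((2*n : ℕ)):ℝ) := by
            refine Real.rpow_le_rpow_of_exponent_le (le_of_lt h1) ?_
            push_cast; linarith
      _ = |c| ^ (2*n) := Real.rpow_natCast _ _
      _ = c ^ (2*n) := abs_pow_even _ _
      _ ≤ c ^ 2 + c ^ (2*n) := le_add_of_nonneg_left (sq_nonneg _)

lemma lq_normalized {v : ℝ × ℝ → ℝ} {r q : ℝ} {n : ℕ} (hv : ContDiff ℝ 1 v)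
    (h0 : ∀ x : ℝ × ℝ, r ≤ |x.1| → v x = 0)
    (ha : ∫ x in Strip, (v x) ^ 2 ≤ 1)
    (hb : ∫ x in Strip, (pd1 v x) ^ 2 ≤ 1)
    (hc : ∫ x in Strip, (pd2 v x) ^ 2 ≤ 1)
    (hq2 : 2 ≤ q) (hn : 1 ≤ n) (hqn : q ≤ 2*(n:ℝ)) :
    ∫ x in Strip, |v x| ^ q ≤ 1 + Kc n := by
  have hq0 : (0:ℝ) < q := by linarith
  have hIq : IntegrableOn (fun x : ℝ × ℝ => |v x| ^ q) Strip := by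
    refine integrableOn_strip_of_continuous
      (hv.continuous.abs.rpow_const (fun x => Or.inr (le_of_lt hq0))) (r := r) ?_
    intro x hx
    rw [h0 x hx, abs_zero, Real.zero_rpow hq0.ne']
  have hI2 : IntegrableOn (fun x : ℝ × ℝ => (v x) ^ 2) Strip :=
    integrableOn_strip_of_continuous (hv.continuous.pow 2) (r := r)
      (fun x hx => by rw [h0 x hx]; ring)
  have hI2n : IntegrableOn (fun x : ℝ × ℝ => (v x) ^ (2*n)) Strip :=
    integrableOn_strip_of_continuous (hv.continuous.pow (2*n)) (r := r)
      (fun x hx => by rw [h0 x hx]; exact zero_pow (by omega))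
  have hmono : ∫ x in Strip, |v x| ^ q ≤ ∫ x in Strip, ((v x) ^ 2 + (v x) ^ (2*n)) := by
    refine setIntegral_mono_on hIq (hI2.add hI2n) measurableSet_strip ?_
    intro x _
    exact rpow_interp hq2 hn hqn
  have h2n : ∫ x in Strip, (v x) ^ (2*n) ≤ Kc n := by
    have he : ∫ x in Strip, (v x) ^ (2*n) = ∫ x in Strip, |v x| ^ (2*n) :=
      setIntegral_congr_fun measurableSet_strip (fun x _ => (abs_pow_even (v x) n).symm)
    rw [he]
    exact moments hv h0 ha hb hc n hn
  calc ∫ x in Strip, |v x| ^ q ≤ ∫ x in Strip, ((v x) ^ 2 + (v x) ^ (2*n)) := hmono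
  _ = (∫ x in Strip, (v x) ^ 2) + ∫ x in Strip, (v x) ^ (2*n) := integral_add hI2 hI2n
  _ ≤ 1 + Kc n := add_le_add ha h2n

lemma lqNorm'_nonneg (q : ℝ) (f : ℝ × ℝ → ℝ) : 0 ≤ lqNorm' q Strip f :=
  Real.rpow_nonneg (setIntegral_nonneg measurableSet_strip
    (fun x _ => Real.rpow_nonneg (abs_nonneg _) _)) _

lemma lq2_eq (f : ℝ × ℝ → ℝ) :
    lqNorm' 2 Strip f = (∫ x in Strip, (f x) ^ 2) ^ ((1:ℝ)/2) := by
  rw [lqNorm']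
  congr 1
  exact setIntegral_congr_fun measurableSet_strip
    (fun x _ => by rw [Real.rpow_two, sq_abs])

lemma lq2_mono {f g : ℝ × ℝ → ℝ}
    (hfg : ∫ x in Strip, (f x) ^ 2 ≤ ∫ x in Strip, (g x) ^ 2) :
    lqNorm' 2 Strip f ≤ lqNorm' 2 Strip g := by
  rw [lq2_eq, lq2_eq]
  exact Real.rpow_le_rpow
    (setIntegral_nonneg measurableSet_strip (fun x _ => sq_nonneg _)) hfg (by norm_num)

lemma pd1_const_mul {v : ℝ × ℝ → ℝ} (hv : ContDiff ℝ 1 v) (cst : ℝ) (x : ℝ × ℝ) :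
    pd1 (fun y => cst * v y) x = cst * pd1 v x := by
  rw [pd1, fderiv_const_mul (hv.differentiable one_ne_zero x) cst]
  simp [pd1]

lemma pd2_const_mul {v : ℝ × ℝ → ℝ} (hv : ContDiff ℝ 1 v) (cst : ℝ) (x : ℝ × ℝ) :
    pd2 (fun y => cst * v y) x = cst * pd2 v x := by
  rw [pd2, fderiv_const_mul (hv.differentiable one_ne_zero x) cst]
  simp [pd2]

/-- the main scalar inequality -/
lemma main_lemma {q : ℝ} (hq : 2 ≤ q) :
    ∃ C : ℝ, 0 < C ∧ ∀ v : ℝ × ℝ → ℝ, ContDiff ℝ 1 v →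
      (∃ r : ℝ, ∀ x : ℝ × ℝ, r ≤ |x.1| → v x = 0) →
      lqNorm' q Strip v
        ≤ C * (lqNorm' 2 Strip v + lqNorm' 2 Strip (pd1 v) + lqNorm' 2 Strip (pd2 v)) := by
  have hq0 : (0:ℝ) < q := by linarith
  set n : ℕ := ⌈q/2⌉₊ with hndef
  have hn : 1 ≤ n := Nat.one_le_iff_ne_zero.mpr (by
    have : (0:ℝ) < q/2 := by linarith
    simpa [hndef] using (Nat.ceil_pos.mpr this).ne')
  have hqn : q ≤ 2*(n:ℝ) := by
    have := Nat.le_ceil (q/2)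
    rw [← hndef] at this
    linarith
  have hCpos : (0:ℝ) < (1 + Kc n) ^ ((1:ℝ)/q) :=
    Real.rpow_pos_of_pos (by linarith [Kc_ge_one n]) _
  refine ⟨(1 + Kc n) ^ ((1:ℝ)/q), hCpos, ?_⟩
  rintro v hv ⟨r, hr⟩
  set a : ℝ := lqNorm' 2 Strip v with hadef
  set b : ℝ := lqNorm' 2 Strip (pd1 v) with hbdef
  set c : ℝ := lqNorm' 2 Strip (pd2 v) with hcdef
  have ha0 : 0 ≤ a := lqNorm'_nonneg _ _
  have hb0 : 0 ≤ b := lqNorm'_nonneg _ _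
  have hc0 : 0 ≤ c := lqNorm'_nonneg _ _
  set N : ℝ := a + b + c with hNdef
  have hN0 : 0 ≤ N := by positivity
  -- basic integrability of squares
  have hI2 : IntegrableOn (fun x : ℝ × ℝ => (v x) ^ 2) Strip :=
    integrableOn_strip_of_continuous (hv.continuous.pow 2) (r := r)
      (fun x hx => by rw [hr x hx]; ring)
  have hX0 : 0 ≤ ∫ x in Strip, (v x) ^ 2 :=
    setIntegral_nonneg measurableSet_strip (fun x _ => sq_nonneg _)
  have haX : a * a = ∫ x in Strip, (v x) ^ 2 := by
    rw [hadef, lq2_eq]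
    exact half_mul_self hX0
  have hY0 : 0 ≤ ∫ x in Strip, (pd1 v x) ^ 2 :=
    setIntegral_nonneg measurableSet_strip (fun x _ => sq_nonneg _)
  have hbY : b * b = ∫ x in Strip, (pd1 v x) ^ 2 := by
    rw [hbdef, lq2_eq]
    exact half_mul_self hY0
  have hZ0 : 0 ≤ ∫ x in Strip, (pd2 v x) ^ 2 :=
    setIntegral_nonneg measurableSet_strip (fun x _ => sq_nonneg _)
  have hcZ : c * c = ∫ x in Strip, (pd2 v x) ^ 2 := by
    rw [hcdef, lq2_eq]
    exact half_mul_self hZ0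
  rcases eq_or_lt_of_le hN0 with hNzero | hNpos
  · -- degenerate case : N = 0
    have haz : a = 0 := by linarith [hNzero.symm ▸ (by linarith : a ≤ N)]
    have hXz : ∫ x in Strip, (v x) ^ 2 = 0 := by rw [← haX, haz]; ring
    have hvz : (fun x => (v x) ^ 2) =ᶠ[ae ((volume : Measure (ℝ × ℝ)).restrict Strip)] 0 :=
      (setIntegral_eq_zero_iff_of_nonneg_ae
        (Filter.Eventually.of_forall (fun x => sq_nonneg _)) hI2).mp hXz
    have hvq : (fun x => |v x| ^ q) =ᶠ[ae ((volume : Measure (ℝ × ℝ)).restrict Strip)] 0 := by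
      filter_upwards [hvz] with x hx
      have : v x = 0 := by
        have := hx
        simp only [Pi.zero_apply] at this
        exact pow_eq_zero_iff (by norm_num : (2:ℕ) ≠ 0) |>.mp this
      simp [this, Real.zero_rpow hq0.ne']
    have : lqNorm' q Strip v = 0 := by
      rw [lqNorm', integral_congr_ae hvq]
      simp only [Pi.zero_apply, integral_zero]
      exact Real.zero_rpow (by positivity : (1:ℝ)/q ≠ 0)
    rw [this, ← hNzero]
    simp
  · -- main case : N > 0
    set u : ℝ × ℝ → ℝ := fun x => N⁻¹ * v x with hudef
    have huC : ContDiff ℝ 1 u := contDiff_const.mul hv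
    have hu0 : ∀ x : ℝ × ℝ, r ≤ |x.1| → u x = 0 := by
      intro x hx; rw [hudef]; simp only []; rw [hr x hx, mul_zero]
    have hNne : N ≠ 0 := ne_of_gt hNpos
    -- normalization of the three squares
    have hua : ∫ x in Strip, (u x) ^ 2 ≤ 1 := by
      have he : ∫ x in Strip, (u x) ^ 2 = (N⁻¹)^2 * ∫ x in Strip, (v x) ^ 2 := by
        rw [← integral_const_mul]
        exact setIntegral_congr_fun measurableSet_strip (fun x _ => by rw [hudef]; simp only []; ring)
      rw [he, ← haX]
      have h1 : a * a ≤ N * N := mul_le_mul (by linarith) (by linarith) ha0 (le_of_lt hNpos)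
      have h2 : (N⁻¹)^2 * (N * N) = 1 := by field_simp
      calc (N⁻¹)^2 * (a * a) ≤ (N⁻¹)^2 * (N * N) :=
            mul_le_mul_of_nonneg_left h1 (by positivity)
      _ = 1 := h2
    have hub : ∫ x in Strip, (pd1 u x) ^ 2 ≤ 1 := by
      have he : ∫ x in Strip, (pd1 u x) ^ 2 = (N⁻¹)^2 * ∫ x in Strip, (pd1 v x) ^ 2 := by
        rw [← integral_const_mul]
        refine setIntegral_congr_fun measurableSet_strip (fun x _ => ?_)
        rw [hudef, pd1_const_mul hv N⁻¹ x]; ring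
      rw [he, ← hbY]
      have h1 : b * b ≤ N * N := mul_le_mul (by linarith) (by linarith) hb0 (le_of_lt hNpos)
      have h2 : (N⁻¹)^2 * (N * N) = 1 := by field_simp
      calc (N⁻¹)^2 * (b * b) ≤ (N⁻¹)^2 * (N * N) :=
            mul_le_mul_of_nonneg_left h1 (by positivity)
      _ = 1 := h2
    have huc : ∫ x in Strip, (pd2 u x) ^ 2 ≤ 1 := by
      have he : ∫ x in Strip, (pd2 u x) ^ 2 = (N⁻¹)^2 * ∫ x in Strip, (pd2 v x) ^ 2 := by
        rw [← integral_const_mul]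
        refine setIntegral_congr_fun measurableSet_strip (fun x _ => ?_)
        rw [hudef, pd2_const_mul hv N⁻¹ x]; ring
      rw [he, ← hcZ]
      have h1 : c * c ≤ N * N := mul_le_mul (by linarith) (by linarith) hc0 (le_of_lt hNpos)
      have h2 : (N⁻¹)^2 * (N * N) = 1 := by field_simp
      calc (N⁻¹)^2 * (c * c) ≤ (N⁻¹)^2 * (N * N) :=
            mul_le_mul_of_nonneg_left h1 (by positivity)
      _ = 1 := h2
    have hkey := lq_normalized huC hu0 hua hub huc hq hn hqn
    -- rescale back
    have hscale : ∫ x in Strip, |v x| ^ q = N ^ q * ∫ x in Strip, |u x| ^ q := by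
      rw [← integral_const_mul]
      refine setIntegral_congr_fun measurableSet_strip (fun x _ => ?_)
      have hvx : v x = N * u x := by
        rw [hudef]; field_simp
      rw [hvx, abs_mul, abs_of_pos hNpos, Real.mul_rpow (le_of_lt hNpos) (abs_nonneg _)]
    have hIu0 : 0 ≤ ∫ x in Strip, |u x| ^ q :=
      setIntegral_nonneg measurableSet_strip (fun x _ => Real.rpow_nonneg (abs_nonneg _) _)
    have hNq0 : (0:ℝ) ≤ N ^ q := Real.rpow_nonneg hN0 _
    calc lqNorm' q Strip v = (N ^ q * ∫ x in Strip, |u x| ^ q) ^ ((1:ℝ)/q) := by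
          rw [lqNorm', hscale]
    _ ≤ (N ^ q * (1 + Kc n)) ^ ((1:ℝ)/q) := by
          refine Real.rpow_le_rpow (by positivity) ?_ (by positivity)
          exact mul_le_mul_of_nonneg_left hkey hNq0
    _ = N * (1 + Kc n) ^ ((1:ℝ)/q) := by
          rw [Real.mul_rpow hNq0 (by linarith [Kc_ge_one n]), ← Real.rpow_mul hN0,
            mul_one_div_cancel hq0.ne', Real.rpow_one]
    _ = (1 + Kc n) ^ ((1:ℝ)/q) * N := by ring

end PS

namespace PS

lemma lqNorm_eq : lqNorm = lqNorm' := rfl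

lemma sqrt_term_le {a s : ℝ} (ha : 0 ≤ a) (hs : a ^ 2 ≤ s) :
    a ≤ s ^ ((1:ℝ)/2) := by
  rw [← Real.sqrt_eq_rpow]
  calc a = Real.sqrt (a ^ 2) := (Real.sqrt_sq ha).symm
  _ ≤ Real.sqrt s := Real.sqrt_le_sqrt hs

end PS

/-- Poincaré–Sobolev inequality on the infinite strip. -/
theorem poincare_sobolev_strip (q : ℝ) (hq : 2 ≤ q) :
    ∃ C : ℝ, 0 < C ∧ ∀ u1 u2 : ℝ × ℝ → ℝ,
      ContDiff ℝ 1 u1 → ContDiff ℝ 1 u2 →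
      (∃ r : ℝ, ∀ x : ℝ × ℝ, r ≤ |x.1| → u1 x = 0 ∧ u2 x = 0) →
      (∀ x ∈ Strip, pd1 u1 x + pd2 u2 x = 0) →
      (∀ x₁ : ℝ, u2 (x₁, 0) = 0 ∧ u2 (x₁, 1) = 0) →
      lqNormVec q Strip u1 u2 ≤ C * gradL2Norm Strip u1 u2 := by
  have hq0 : (0:ℝ) < q := by linarith
  obtain ⟨C₀, hC₀, hmain⟩ := PS.main_lemma hq
  refine ⟨6 * C₀, by positivity, ?_⟩
  intro u1 u2 h1C h2C hrr hdiv hbc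
  obtain ⟨r, hr⟩ := hrr
  have hr1 : ∀ x : ℝ × ℝ, r ≤ |x.1| → u1 x = 0 := fun x hx => (hr x hx).1
  have hr2 : ∀ x : ℝ × ℝ, r ≤ |x.1| → u2 x = 0 := fun x hx => (hr x hx).2
  -- Poincaré inequalities
  have hp1 : ∫ x in Strip, (u1 x) ^ 2 ≤ ∫ x in Strip, (pd2 u1 x) ^ 2 := by
    refine PS.poincare_sq h1C hr1 ?_
    intro x hx
    have hmz : ∫ τ in PS.I01, u1 (x.1, τ) = 0 :=
      PS.mean_zero_u1 h1C h2C hr1 hdiv hbc x.1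
    obtain ⟨τ, hτ, hzero⟩ := PS.exists_zero_of_mean_zero
      ((h1C.continuous.comp (continuous_const.prodMk continuous_id)).continuousOn) hmz
    exact PS.pointwise_of_zero_at h1C hx hτ hzero
  have hp2 : ∫ x in Strip, (u2 x) ^ 2 ≤ ∫ x in Strip, (pd2 u2 x) ^ 2 := by
    refine PS.poincare_sq h2C hr2 ?_
    intro x hx
    exact PS.pointwise_of_zero_at h2C hx (show (0:ℝ) ∈ PS.I01 by simp) ((hbc x.1).1)
  -- each first-order norm is dominated by the full gradient norm
  set a1 : ℝ := lqNorm 2 Strip (pd1 u1) with ha1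
  set a2 : ℝ := lqNorm 2 Strip (pd2 u1) with ha2
  set a3 : ℝ := lqNorm 2 Strip (pd1 u2) with ha3
  set a4 : ℝ := lqNorm 2 Strip (pd2 u2) with ha4
  have h10 : 0 ≤ a1 := by rw [ha1, PS.lqNorm_eq]; exact PS.lqNorm'_nonneg _ _
  have h20 : 0 ≤ a2 := by rw [ha2, PS.lqNorm_eq]; exact PS.lqNorm'_nonneg _ _
  have h30 : 0 ≤ a3 := by rw [ha3, PS.lqNorm_eq]; exact PS.lqNorm'_nonneg _ _
  have h40 : 0 ≤ a4 := by rw [ha4, PS.lqNorm_eq]; exact PS.lqNorm'_nonneg _ _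
  set G : ℝ := gradL2Norm Strip u1 u2 with hGdef
  have hGeq : G = (a1 ^ 2 + a2 ^ 2 + a3 ^ 2 + a4 ^ 2) ^ ((1:ℝ)/2) := by
    rw [hGdef, gradL2Norm]
    congr 1
    rw [Real.rpow_two, Real.rpow_two, Real.rpow_two, Real.rpow_two]
  have hsum0 : 0 ≤ a1 ^ 2 + a2 ^ 2 + a3 ^ 2 + a4 ^ 2 := by positivity
  have hG0 : 0 ≤ G := by rw [hGeq]; positivity
  have hGa1 : a1 ≤ G := by
    rw [hGeq]; exact PS.sqrt_term_le h10 (by nlinarith [sq_nonneg a2, sq_nonneg a3, sq_nonneg a4])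
  have hGa2 : a2 ≤ G := by
    rw [hGeq]; exact PS.sqrt_term_le h20 (by nlinarith [sq_nonneg a1, sq_nonneg a3, sq_nonneg a4])
  have hGa3 : a3 ≤ G := by
    rw [hGeq]; exact PS.sqrt_term_le h30 (by nlinarith [sq_nonneg a1, sq_nonneg a2, sq_nonneg a4])
  have hGa4 : a4 ≤ G := by
    rw [hGeq]; exact PS.sqrt_term_le h40 (by nlinarith [sq_nonneg a1, sq_nonneg a2, sq_nonneg a3])
  -- apply the main lemma to each component
  have key1 : lqNorm q Strip u1 ≤ C₀ * (3 * G) := by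
    have h := hmain u1 h1C ⟨r, hr1⟩
    rw [← PS.lqNorm_eq] at h
    have hN : lqNorm 2 Strip u1 + lqNorm 2 Strip (pd1 u1) + lqNorm 2 Strip (pd2 u1) ≤ 3 * G := by
      have hu : lqNorm 2 Strip u1 ≤ a2 := by
        rw [ha2, PS.lqNorm_eq]; exact PS.lq2_mono hp1
      linarith
    calc lqNorm q Strip u1
        ≤ C₀ * (lqNorm 2 Strip u1 + lqNorm 2 Strip (pd1 u1) + lqNorm 2 Strip (pd2 u1)) := h
    _ ≤ C₀ * (3 * G) := mul_le_mul_of_nonneg_left hN (le_of_lt hC₀)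
  have key2 : lqNorm q Strip u2 ≤ C₀ * (3 * G) := by
    have h := hmain u2 h2C ⟨r, hr2⟩
    rw [← PS.lqNorm_eq] at h
    have hN : lqNorm 2 Strip u2 + lqNorm 2 Strip (pd1 u2) + lqNorm 2 Strip (pd2 u2) ≤ 3 * G := by
      have hu : lqNorm 2 Strip u2 ≤ a4 := by
        rw [ha4, PS.lqNorm_eq]; exact PS.lq2_mono hp2
      linarith
    calc lqNorm q Strip u2
        ≤ C₀ * (lqNorm 2 Strip u2 + lqNorm 2 Strip (pd1 u2) + lqNorm 2 Strip (pd2 u2)) := h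
    _ ≤ C₀ * (3 * G) := mul_le_mul_of_nonneg_left hN (le_of_lt hC₀)
  -- combine the two components
  set A : ℝ := lqNorm q Strip u1 with hA
  set B : ℝ := lqNorm q Strip u2 with hB
  have hA0 : 0 ≤ A := by rw [hA, PS.lqNorm_eq]; exact PS.lqNorm'_nonneg _ _
  have hB0 : 0 ≤ B := by rw [hB, PS.lqNorm_eq]; exact PS.lqNorm'_nonneg _ _
  set D : ℝ := C₀ * (3 * G) with hD
  have hD0 : 0 ≤ D := by positivity
  have hsumq : A ^ q + B ^ q ≤ 2 * D ^ q := by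
    have h1 : A ^ q ≤ D ^ q := Real.rpow_le_rpow hA0 key1 (le_of_lt hq0)
    have h2 : B ^ q ≤ D ^ q := Real.rpow_le_rpow hB0 key2 (le_of_lt hq0)
    linarith
  have hDq0 : (0:ℝ) ≤ D ^ q := Real.rpow_nonneg hD0 _
  calc lqNormVec q Strip u1 u2 = (A ^ q + B ^ q) ^ ((1:ℝ)/q) := rfl
  _ ≤ (2 * D ^ q) ^ ((1:ℝ)/q) := by
      refine Real.rpow_le_rpow ?_ hsumq (by positivity)
      have h1 : (0:ℝ) ≤ A ^ q := Real.rpow_nonneg hA0 _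
      have h2 : (0:ℝ) ≤ B ^ q := Real.rpow_nonneg hB0 _
      linarith
  _ = 2 ^ ((1:ℝ)/q) * D := by
      rw [Real.mul_rpow (by norm_num) hDq0, ← Real.rpow_mul hD0,
        mul_one_div_cancel hq0.ne', Real.rpow_one]
  _ ≤ 2 * D := by
      have h2q : (2:ℝ) ^ ((1:ℝ)/q) ≤ 2 := by
        calc (2:ℝ) ^ ((1:ℝ)/q) ≤ (2:ℝ) ^ (1:ℝ) :=
              Real.rpow_le_rpow_of_exponent_le (by norm_num)
                (by rw [div_le_one hq0]; linarith)
        _ = 2 := Real.rpow_one 2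
      exact mul_le_mul_of_nonneg_right h2q hD0
  _ = (6 * C₀) * G := by rw [hD]; ring
end
end

section
/- Uniqueness of classical solutions to the semi-dissipative Boussinesq system on a rectangle with Navier boundary conditions: let T > 0, R > 0, μ > 0, k₀ ≤ 0, k₁ ≤ 0, and let g⃗ ∈ ℝ² be a constant vector. Suppose (u,p,θ) and (ũ,p̃,θ̃) are two classical solutions on [0,T]×Ω_R of the system ∂_t u + (u·∇)u + ∇p = μΔu + θ·g⃗, ∂_tθ + u·∇θ = 0, ∂₁u₁ + ∂₂u₂ = 0 (with u, ũ continuous together with their first time derivatives and first and second spatial derivatives, and p, p̃, θ, θ̃ continuously differentiable on [0,T]×Ω_R), both satisfying the boundary conditions u₂(t,x₁,0) = u₂(t,x₁,1) = 0, ∂₂u₁(t,x₁,1) = (k₁/μ)·u₁(t,x₁,1), ∂₂u₁(t,x₁,0) = −(k₀/μ)·u₁(t,x₁,0) for all x₁ ∈ [-R,R], and u(t,·) = 0 on the lateral sides {±R}×[0,1] (and the same for ũ). If u(0,·) = ũ(0,·) and θ(0,·) = θ̃(0,·), then u = ũ and θ = θ̃ on all of [0,T]×Ω_R. -/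
open MeasureTheory Set

noncomputable section

/-- the rectangle `Ω_R = [-R,R] × [0,1]` -/
def OmegaR (R : ℝ) : Set (ℝ × ℝ) := (Icc (-R) R) ×ˢ (Icc (0 : ℝ) 1)

/-- spatial partial derivative in the horizontal direction of a
time-dependent scalar field `f(t, x₁, x₂)` -/
def sd1 (f : ℝ × ℝ × ℝ → ℝ) (p : ℝ × ℝ × ℝ) : ℝ :=
  fderiv ℝ (fun y : ℝ × ℝ => f (p.1, y)) p.2 (1, 0)

/-- spatial partial derivative in the vertical direction -/
def sd2 (f : ℝ × ℝ × ℝ → ℝ) (p : ℝ × ℝ × ℝ) : ℝ :=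
  fderiv ℝ (fun y : ℝ × ℝ => f (p.1, y)) p.2 (0, 1)

/-- time derivative of a time-dependent scalar field -/
def td (f : ℝ × ℝ × ℝ → ℝ) (p : ℝ × ℝ × ℝ) : ℝ :=
  deriv (fun s : ℝ => f (s, p.2)) p.1

/-- classical solution of the semi-dissipative Boussinesq system on `[0,T] × Ω_R`
with Navier boundary conditions, gravity vector `(g1, g2)`. -/
structure IsBoussinesqSolution (T R μ k0 k1 g1 g2 : ℝ)
    (u1 u2 pr θ : ℝ × ℝ × ℝ → ℝ) : Prop where
  -- regularity: u continuous together with first time derivative and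
  -- first and second spatial derivatives
  regu1 : ContDiff ℝ 1 u1
  regu2 : ContDiff ℝ 1 u2
  regu1x : ∀ t : ℝ, ContDiff ℝ 2 (fun y : ℝ × ℝ => u1 (t, y))
  regu2x : ∀ t : ℝ, ContDiff ℝ 2 (fun y : ℝ × ℝ => u2 (t, y))
  regu1xx : Continuous (sd1 (sd1 u1)) ∧ Continuous (sd1 (sd2 u1)) ∧
    Continuous (sd2 (sd1 u1)) ∧ Continuous (sd2 (sd2 u1))
  regu2xx : Continuous (sd1 (sd1 u2)) ∧ Continuous (sd1 (sd2 u2)) ∧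
    Continuous (sd2 (sd1 u2)) ∧ Continuous (sd2 (sd2 u2))
  -- p and θ continuously differentiable
  regp : ContDiff ℝ 1 pr
  regθ : ContDiff ℝ 1 θ
  -- momentum equations
  mom1 : ∀ p ∈ (Icc (0 : ℝ) T) ×ˢ OmegaR R,
    td u1 p + (u1 p * sd1 u1 p + u2 p * sd2 u1 p) + sd1 pr p =
      μ * (sd1 (sd1 u1) p + sd2 (sd2 u1) p) + θ p * g1
  mom2 : ∀ p ∈ (Icc (0 : ℝ) T) ×ˢ OmegaR R,
    td u2 p + (u1 p * sd1 u2 p + u2 p * sd2 u2 p) + sd2 pr p =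
      μ * (sd1 (sd1 u2) p + sd2 (sd2 u2) p) + θ p * g2
  -- transport equation for the temperature
  transport : ∀ p ∈ (Icc (0 : ℝ) T) ×ˢ OmegaR R,
    td θ p + (u1 p * sd1 θ p + u2 p * sd2 θ p) = 0
  -- incompressibility
  divfree : ∀ p ∈ (Icc (0 : ℝ) T) ×ˢ OmegaR R, sd1 u1 p + sd2 u2 p = 0
  -- Navier boundary conditions on top and bottom
  bc_tb : ∀ t ∈ Icc (0 : ℝ) T, ∀ x₁ ∈ Icc (-R) R,
    u2 (t, x₁, 0) = 0 ∧ u2 (t, x₁, 1) = 0 ∧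
    sd2 u1 (t, x₁, 1) = (k1 / μ) * u1 (t, x₁, 1) ∧
    sd2 u1 (t, x₁, 0) = -(k0 / μ) * u1 (t, x₁, 0)
  -- zero boundary values on the lateral sides
  bc_lat : ∀ t ∈ Icc (0 : ℝ) T, ∀ x₂ ∈ Icc (0 : ℝ) 1,
    u1 (t, R, x₂) = 0 ∧ u1 (t, -R, x₂) = 0 ∧ u2 (t, R, x₂) = 0 ∧ u2 (t, -R, x₂) = 0


/-! ### Auxiliary general lemmas -/

theorem hasDerivAt_tslice (f : ℝ × ℝ × ℝ → ℝ) (hf : Differentiable ℝ f) (p : ℝ × ℝ × ℝ) :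
    HasDerivAt (fun s : ℝ => f (s, p.2)) (fderiv ℝ f p (1, 0, 0)) p.1 := by
  have h1 : HasDerivAt (fun s : ℝ => (s, p.2)) ((1 : ℝ), ((0 : ℝ), (0 : ℝ))) p.1 :=
    (hasDerivAt_id p.1).prodMk (hasDerivAt_const p.1 p.2)
  exact (hf (p.1, p.2)).hasFDerivAt.comp_hasDerivAt p.1 h1

theorem td_eq (f : ℝ × ℝ × ℝ → ℝ) (hf : Differentiable ℝ f) (p : ℝ × ℝ × ℝ) :
    td f p = fderiv ℝ f p (1, 0, 0) := (hasDerivAt_tslice f hf p).deriv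

theorem hasDerivAt_td (f : ℝ × ℝ × ℝ → ℝ) (hf : Differentiable ℝ f) (p : ℝ × ℝ × ℝ) :
    HasDerivAt (fun s : ℝ => f (s, p.2)) (td f p) p.1 := by
  rw [td_eq f hf]; exact hasDerivAt_tslice f hf p

theorem hasFDerivAt_sslice (f : ℝ × ℝ × ℝ → ℝ) (hf : Differentiable ℝ f) (t : ℝ) (y : ℝ × ℝ) :
    HasFDerivAt (fun y : ℝ × ℝ => f (t, y))
      ((fderiv ℝ f (t, y)).comp (ContinuousLinearMap.inr ℝ ℝ (ℝ × ℝ))) y :=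
  (hf (t, y)).hasFDerivAt.comp y (hasFDerivAt_prodMk_right t y)

theorem sd1_eq (f : ℝ × ℝ × ℝ → ℝ) (hf : Differentiable ℝ f) (p : ℝ × ℝ × ℝ) :
    sd1 f p = fderiv ℝ f p (0, 1, 0) := by
  have := (hasFDerivAt_sslice f hf p.1 p.2).fderiv
  rw [sd1, this]; rfl

theorem sd2_eq (f : ℝ × ℝ × ℝ → ℝ) (hf : Differentiable ℝ f) (p : ℝ × ℝ × ℝ) :
    sd2 f p = fderiv ℝ f p (0, 0, 1) := by
  have := (hasFDerivAt_sslice f hf p.1 p.2).fderiv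
  rw [sd2, this]; rfl

theorem cont_td (f : ℝ × ℝ × ℝ → ℝ) (hf : ContDiff ℝ 1 f) : Continuous (td f) := by
  have : Continuous fun p : ℝ × ℝ × ℝ => fderiv ℝ f p (1, 0, 0) :=
    (hf.continuous_fderiv one_ne_zero).clm_apply continuous_const
  exact this.congr fun p => (td_eq f (hf.differentiable one_ne_zero) p).symm

theorem cont_sd1 (f : ℝ × ℝ × ℝ → ℝ) (hf : ContDiff ℝ 1 f) : Continuous (sd1 f) := by
  have : Continuous fun p : ℝ × ℝ × ℝ => fderiv ℝ f p (0, 1, 0) :=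
    (hf.continuous_fderiv one_ne_zero).clm_apply continuous_const
  exact this.congr fun p => (sd1_eq f (hf.differentiable one_ne_zero) p).symm

theorem cont_sd2 (f : ℝ × ℝ × ℝ → ℝ) (hf : ContDiff ℝ 1 f) : Continuous (sd2 f) := by
  have : Continuous fun p : ℝ × ℝ × ℝ => fderiv ℝ f p (0, 0, 1) :=
    (hf.continuous_fderiv one_ne_zero).clm_apply continuous_const
  exact this.congr fun p => (sd2_eq f (hf.differentiable one_ne_zero) p).symm

theorem contDiff_sslice (f : ℝ × ℝ × ℝ → ℝ) (hf : ContDiff ℝ 1 f) (t : ℝ) :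
    ContDiff ℝ 1 (fun y : ℝ × ℝ => f (t, y)) :=
  hf.comp (contDiff_const.prodMk contDiff_id)

theorem omega_eq (R : ℝ) : OmegaR R = Icc ((-R, 0) : ℝ × ℝ) ((R, 1) : ℝ × ℝ) := by
  rw [Icc_prod_eq]; rfl

/-- Divergence theorem on `Ω_R` for globally nice vector fields. -/
theorem omegaR_divergence (R : ℝ) (hR : 0 < R) (f g : ℝ × ℝ → ℝ)
    (f' g' : ℝ × ℝ → (ℝ × ℝ) →L[ℝ] ℝ)
    (hf : ∀ y, HasFDerivAt f (f' y) y) (hg : ∀ y, HasFDerivAt g (g' y) y)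
    (hi : Continuous fun y => f' y (1, 0) + g' y (0, 1)) :
    ∫ y in OmegaR R, (f' y (1, 0) + g' y (0, 1)) =
      (((∫ x in (-R)..R, g (x, 1)) - ∫ x in (-R)..R, g (x, 0)) +
          ∫ t in (0:ℝ)..1, f (R, t)) - ∫ t in (0:ℝ)..1, f (-R, t) := by
  rw [omega_eq]
  have hle : ((-R, 0) : ℝ × ℝ) ≤ (R, 1) := ⟨by simp; linarith, by norm_num⟩
  have hcf : Continuous f := by
    rw [continuous_iff_continuousAt]; exact fun y => (hf y).continuousAt
  have hcg : Continuous g := by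
    rw [continuous_iff_continuousAt]; exact fun y => (hg y).continuousAt
  exact integral_divergence_prod_Icc_of_hasFDerivAt_off_countable_of_le f g f' g'
    (-R, 0) (R, 1) hle ∅ countable_empty hcf.continuousOn hcg.continuousOn
    (fun x _ => hf x) (fun x _ => hg x)
    (hi.continuousOn.integrableOn_compact isCompact_Icc)

/-! ### The difference fields -/

/-- the energy density -/
def Phi (u1 u2 θ v1 v2 θ' : ℝ × ℝ × ℝ → ℝ) : ℝ × ℝ × ℝ → ℝ := fun p =>
  (u1 p - v1 p) ^ 2 + (u2 p - v2 p) ^ 2 + (θ p - θ' p) ^ 2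

/-- time derivative of the energy density -/
def Hf (u1 u2 θ v1 v2 θ' : ℝ × ℝ × ℝ → ℝ) : ℝ × ℝ × ℝ → ℝ := fun p =>
  2 * (u1 p - v1 p) * (td u1 p - td v1 p) + 2 * (u2 p - v2 p) * (td u2 p - td v2 p)
    + 2 * (θ p - θ' p) * (td θ p - td θ' p)

/-- first component of the spatial gradient of `Phi` -/
def GP1 (u1 u2 θ v1 v2 θ' : ℝ × ℝ × ℝ → ℝ) : ℝ × ℝ × ℝ → ℝ := fun p =>
  2 * (u1 p - v1 p) * (sd1 u1 p - sd1 v1 p) + 2 * (u2 p - v2 p) * (sd1 u2 p - sd1 v2 p)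
    + 2 * (θ p - θ' p) * (sd1 θ p - sd1 θ' p)

/-- second component of the spatial gradient of `Phi` -/
def GP2 (u1 u2 θ v1 v2 θ' : ℝ × ℝ × ℝ → ℝ) : ℝ × ℝ × ℝ → ℝ := fun p =>
  2 * (u1 p - v1 p) * (sd2 u1 p - sd2 v1 p) + 2 * (u2 p - v2 p) * (sd2 u2 p - sd2 v2 p)
    + 2 * (θ p - θ' p) * (sd2 θ p - sd2 θ' p)

/-- transport term -/
def D1 (u1 u2 θ v1 v2 θ' : ℝ × ℝ × ℝ → ℝ) : ℝ × ℝ × ℝ → ℝ := fun p =>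
  u1 p * GP1 u1 u2 θ v1 v2 θ' p + u2 p * GP2 u1 u2 θ v1 v2 θ' p

/-- pressure term -/
def D2 (u1 u2 pr v1 v2 qr : ℝ × ℝ × ℝ → ℝ) : ℝ × ℝ × ℝ → ℝ := fun p =>
  (u1 p - v1 p) * (sd1 pr p - sd1 qr p) + (u2 p - v2 p) * (sd2 pr p - sd2 qr p)

/-- viscous term -/
def D3 (u1 u2 v1 v2 : ℝ × ℝ × ℝ → ℝ) : ℝ × ℝ × ℝ → ℝ := fun p =>
  (u1 p - v1 p) * ((sd1 (sd1 u1) p - sd1 (sd1 v1) p) + (sd2 (sd2 u1) p - sd2 (sd2 v1) p))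
    + (u2 p - v2 p) * ((sd1 (sd1 u2) p - sd1 (sd1 v2) p) + (sd2 (sd2 u2) p - sd2 (sd2 v2) p))

/-- lower order terms -/
def Bulk (g1 g2 : ℝ) (u1 u2 θ v1 v2 θ' : ℝ × ℝ × ℝ → ℝ) : ℝ × ℝ × ℝ → ℝ := fun p =>
  -2 * ((u1 p - v1 p) * ((u1 p - v1 p) * sd1 v1 p + (u2 p - v2 p) * sd2 v1 p)
      + (u2 p - v2 p) * ((u1 p - v1 p) * sd1 v2 p + (u2 p - v2 p) * sd2 v2 p)
      + (θ p - θ' p) * ((u1 p - v1 p) * sd1 θ' p + (u2 p - v2 p) * sd2 θ' p))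
    + 2 * (θ p - θ' p) * ((u1 p - v1 p) * g1 + (u2 p - v2 p) * g2)

/-- the pointwise energy identity -/
theorem Hf_eq {T R μ k0 k1 g1 g2 : ℝ} {u1 u2 pr θ v1 v2 qr θ' : ℝ × ℝ × ℝ → ℝ}
    (hsol : IsBoussinesqSolution T R μ k0 k1 g1 g2 u1 u2 pr θ)
    (hsol' : IsBoussinesqSolution T R μ k0 k1 g1 g2 v1 v2 qr θ')
    {p : ℝ × ℝ × ℝ} (hp : p ∈ (Icc (0 : ℝ) T) ×ˢ OmegaR R) :
    Hf u1 u2 θ v1 v2 θ' p =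
      -(D1 u1 u2 θ v1 v2 θ' p) - 2 * D2 u1 u2 pr v1 v2 qr p
        + 2 * μ * D3 u1 u2 v1 v2 p + Bulk g1 g2 u1 u2 θ v1 v2 θ' p := by
  have h1 := hsol.mom1 p hp
  have h2 := hsol.mom2 p hp
  have h3 := hsol.transport p hp
  have h1' := hsol'.mom1 p hp
  have h2' := hsol'.mom2 p hp
  have h3' := hsol'.transport p hp
  simp only [Hf, D1, D2, D3, Bulk, GP1, GP2]
  linear_combination (2 * (u1 p - v1 p)) * h1 - (2 * (u1 p - v1 p)) * h1'
    + (2 * (u2 p - v2 p)) * h2 - (2 * (u2 p - v2 p)) * h2'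
    + (2 * (θ p - θ' p)) * h3 - (2 * (θ p - θ' p)) * h3'

theorem hasDerivAt_Phi {u1 u2 θ v1 v2 θ' : ℝ × ℝ × ℝ → ℝ}
    (hu1 : Differentiable ℝ u1) (hu2 : Differentiable ℝ u2) (hθ : Differentiable ℝ θ)
    (hv1 : Differentiable ℝ v1) (hv2 : Differentiable ℝ v2) (hθ' : Differentiable ℝ θ')
    (t : ℝ) (x : ℝ × ℝ) :
    HasDerivAt (fun s : ℝ => Phi u1 u2 θ v1 v2 θ' (s, x)) (Hf u1 u2 θ v1 v2 θ' (t, x)) t := by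
  have H1 := hasDerivAt_td u1 hu1 (t, x)
  have H2 := hasDerivAt_td u2 hu2 (t, x)
  have H3 := hasDerivAt_td θ hθ (t, x)
  have H1' := hasDerivAt_td v1 hv1 (t, x)
  have H2' := hasDerivAt_td v2 hv2 (t, x)
  have H3' := hasDerivAt_td θ' hθ' (t, x)
  have := (((H1.sub H1').pow 2).add ((H2.sub H2').pow 2)).add ((H3.sub H3').pow 2)
  refine this.congr_deriv ?_
  simp only [Hf, Pi.sub_apply]
  push_cast
  ring

section ContinuityPack

variable {T R μ k0 k1 g1 g2 : ℝ} {u1 u2 pr θ v1 v2 qr θ' : ℝ × ℝ × ℝ → ℝ}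
    (hsol : IsBoussinesqSolution T R μ k0 k1 g1 g2 u1 u2 pr θ)
    (hsol' : IsBoussinesqSolution T R μ k0 k1 g1 g2 v1 v2 qr θ')

include hsol hsol'

theorem cont_Phi : Continuous (Phi u1 u2 θ v1 v2 θ') := by
  have := hsol.regu1.continuous; have := hsol.regu2.continuous; have := hsol.regθ.continuous
  have := hsol'.regu1.continuous; have := hsol'.regu2.continuous; have := hsol'.regθ.continuous
  unfold Phi; fun_prop

theorem cont_Hf : Continuous (Hf u1 u2 θ v1 v2 θ') := by
  have := hsol.regu1.continuous; have := hsol.regu2.continuous; have := hsol.regθ.continuous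
  have := hsol'.regu1.continuous; have := hsol'.regu2.continuous; have := hsol'.regθ.continuous
  have := cont_td u1 hsol.regu1; have := cont_td u2 hsol.regu2; have := cont_td θ hsol.regθ
  have := cont_td v1 hsol'.regu1; have := cont_td v2 hsol'.regu2; have := cont_td θ' hsol'.regθ
  unfold Hf; fun_prop

theorem cont_GP1 : Continuous (GP1 u1 u2 θ v1 v2 θ') := by
  have := hsol.regu1.continuous; have := hsol.regu2.continuous; have := hsol.regθ.continuous
  have := hsol'.regu1.continuous; have := hsol'.regu2.continuous; have := hsol'.regθ.continuous
  have := cont_sd1 u1 hsol.regu1; have := cont_sd1 u2 hsol.regu2; have := cont_sd1 θ hsol.regθ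
  have := cont_sd1 v1 hsol'.regu1; have := cont_sd1 v2 hsol'.regu2
  have := cont_sd1 θ' hsol'.regθ
  unfold GP1; fun_prop

theorem cont_GP2 : Continuous (GP2 u1 u2 θ v1 v2 θ') := by
  have := hsol.regu1.continuous; have := hsol.regu2.continuous; have := hsol.regθ.continuous
  have := hsol'.regu1.continuous; have := hsol'.regu2.continuous; have := hsol'.regθ.continuous
  have := cont_sd2 u1 hsol.regu1; have := cont_sd2 u2 hsol.regu2; have := cont_sd2 θ hsol.regθ
  have := cont_sd2 v1 hsol'.regu1; have := cont_sd2 v2 hsol'.regu2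
  have := cont_sd2 θ' hsol'.regθ
  unfold GP2; fun_prop

theorem cont_D1 : Continuous (D1 u1 u2 θ v1 v2 θ') := by
  have := hsol.regu1.continuous; have := hsol.regu2.continuous
  have := cont_GP1 hsol hsol'; have := cont_GP2 hsol hsol'
  unfold D1; fun_prop

theorem cont_D2 : Continuous (D2 u1 u2 pr v1 v2 qr) := by
  have := hsol.regu1.continuous; have := hsol.regu2.continuous
  have := hsol'.regu1.continuous; have := hsol'.regu2.continuous
  have := cont_sd1 pr hsol.regp; have := cont_sd2 pr hsol.regp
  have := cont_sd1 qr hsol'.regp; have := cont_sd2 qr hsol'.regp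
  unfold D2; fun_prop

theorem cont_D3 : Continuous (D3 u1 u2 v1 v2) := by
  have := hsol.regu1.continuous; have := hsol.regu2.continuous
  have := hsol'.regu1.continuous; have := hsol'.regu2.continuous
  obtain ⟨c1, -, -, c4⟩ := hsol.regu1xx
  obtain ⟨c1', -, -, c4'⟩ := hsol'.regu1xx
  obtain ⟨e1, -, -, e4⟩ := hsol.regu2xx
  obtain ⟨e1', -, -, e4'⟩ := hsol'.regu2xx
  unfold D3; fun_prop

theorem cont_Bulk : Continuous (Bulk g1 g2 u1 u2 θ v1 v2 θ') := by
  have := hsol.regu1.continuous; have := hsol.regu2.continuous; have := hsol.regθ.continuous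
  have := hsol'.regu1.continuous; have := hsol'.regu2.continuous; have := hsol'.regθ.continuous
  have := cont_sd1 v1 hsol'.regu1; have := cont_sd1 v2 hsol'.regu2
  have := cont_sd2 v1 hsol'.regu1; have := cont_sd2 v2 hsol'.regu2
  have := cont_sd1 θ' hsol'.regθ; have := cont_sd2 θ' hsol'.regθ
  unfold Bulk; fun_prop

end ContinuityPack

/-! ### Spatial slice derivatives -/

/-- derivative of the spatial slice as a continuous linear map -/
def Ds (f : ℝ × ℝ × ℝ → ℝ) (s : ℝ) (y : ℝ × ℝ) : (ℝ × ℝ) →L[ℝ] ℝ :=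
  (fderiv ℝ f (s, y)).comp (ContinuousLinearMap.inr ℝ ℝ (ℝ × ℝ))

theorem hasFDerivAt_Ds (f : ℝ × ℝ × ℝ → ℝ) (hf : Differentiable ℝ f) (s : ℝ) (y : ℝ × ℝ) :
    HasFDerivAt (fun y : ℝ × ℝ => f (s, y)) (Ds f s y) y :=
  hasFDerivAt_sslice f hf s y

theorem Ds_apply1 (f : ℝ × ℝ × ℝ → ℝ) (hf : Differentiable ℝ f) (s : ℝ) (y : ℝ × ℝ) :
    Ds f s y (1, 0) = sd1 f (s, y) := (sd1_eq f hf (s, y)).symm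

theorem Ds_apply2 (f : ℝ × ℝ × ℝ → ℝ) (hf : Differentiable ℝ f) (s : ℝ) (y : ℝ × ℝ) :
    Ds f s y (0, 1) = sd2 f (s, y) := (sd2_eq f hf (s, y)).symm

/-- first spatial derivatives of a function with C² slices are C¹ in space -/
theorem contDiff_sd1_sl (f : ℝ × ℝ × ℝ → ℝ) (s : ℝ)
    (hf : ContDiff ℝ 2 fun y : ℝ × ℝ => f (s, y)) :
    ContDiff ℝ 1 (fun y : ℝ × ℝ => sd1 f (s, y)) :=
  (hf.fderiv_right le_rfl).clm_apply contDiff_const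

theorem contDiff_sd2_sl (f : ℝ × ℝ × ℝ → ℝ) (s : ℝ)
    (hf : ContDiff ℝ 2 fun y : ℝ × ℝ => f (s, y)) :
    ContDiff ℝ 1 (fun y : ℝ × ℝ => sd2 f (s, y)) :=
  (hf.fderiv_right le_rfl).clm_apply contDiff_const

theorem hasFDerivAt_sd1_sl (f : ℝ × ℝ × ℝ → ℝ) (s : ℝ)
    (hf : ContDiff ℝ 2 fun y : ℝ × ℝ => f (s, y)) (y : ℝ × ℝ) :
    HasFDerivAt (fun y : ℝ × ℝ => sd1 f (s, y))
      (fderiv ℝ (fun y : ℝ × ℝ => sd1 f (s, y)) y) y :=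
  (((contDiff_sd1_sl f s hf).differentiable one_ne_zero) y).hasFDerivAt

theorem hasFDerivAt_sd2_sl (f : ℝ × ℝ × ℝ → ℝ) (s : ℝ)
    (hf : ContDiff ℝ 2 fun y : ℝ × ℝ => f (s, y)) (y : ℝ × ℝ) :
    HasFDerivAt (fun y : ℝ × ℝ => sd2 f (s, y))
      (fderiv ℝ (fun y : ℝ × ℝ => sd2 f (s, y)) y) y :=
  (((contDiff_sd2_sl f s hf).differentiable one_ne_zero) y).hasFDerivAt

theorem fderiv_sd1_sl_apply1 (f : ℝ × ℝ × ℝ → ℝ) (s : ℝ) (y : ℝ × ℝ) :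
    fderiv ℝ (fun y : ℝ × ℝ => sd1 f (s, y)) y (1, 0) = sd1 (sd1 f) (s, y) := rfl

theorem fderiv_sd2_sl_apply2 (f : ℝ × ℝ × ℝ → ℝ) (s : ℝ) (y : ℝ × ℝ) :
    fderiv ℝ (fun y : ℝ × ℝ => sd2 f (s, y)) y (0, 1) = sd2 (sd2 f) (s, y) := rfl

theorem omegaR_measurable (R : ℝ) : MeasurableSet (OmegaR R) :=
  measurableSet_Icc.prod measurableSet_Icc

theorem integral_D2_eq_zero {T R μ k0 k1 g1 g2 : ℝ} {u1 u2 pr θ v1 v2 qr θ' : ℝ × ℝ × ℝ → ℝ}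
    (hsol : IsBoussinesqSolution T R μ k0 k1 g1 g2 u1 u2 pr θ)
    (hsol' : IsBoussinesqSolution T R μ k0 k1 g1 g2 v1 v2 qr θ')
    (hR : 0 < R) {s : ℝ} (hs : s ∈ Icc (0:ℝ) T) :
    ∫ y in OmegaR R, D2 u1 u2 pr v1 v2 qr (s, y) = 0 := by
  have du1 := hsol.regu1.differentiable one_ne_zero
  have du2 := hsol.regu2.differentiable one_ne_zero
  have dv1 := hsol'.regu1.differentiable one_ne_zero
  have dv2 := hsol'.regu2.differentiable one_ne_zero
  have dpr := hsol.regp.differentiable one_ne_zero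
  have dqr := hsol'.regp.differentiable one_ne_zero
  set F : ℝ × ℝ → ℝ := fun y => (pr (s, y) - qr (s, y)) * (u1 (s, y) - v1 (s, y)) with hF
  set G : ℝ × ℝ → ℝ := fun y => (pr (s, y) - qr (s, y)) * (u2 (s, y) - v2 (s, y)) with hG
  set F' : ℝ × ℝ → (ℝ × ℝ) →L[ℝ] ℝ := fun y =>
    (pr (s, y) - qr (s, y)) • (Ds u1 s y - Ds v1 s y)
      + (u1 (s, y) - v1 (s, y)) • (Ds pr s y - Ds qr s y) with hF'
  set G' : ℝ × ℝ → (ℝ × ℝ) →L[ℝ] ℝ := fun y =>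
    (pr (s, y) - qr (s, y)) • (Ds u2 s y - Ds v2 s y)
      + (u2 (s, y) - v2 (s, y)) • (Ds pr s y - Ds qr s y) with hG'
  have hFd : ∀ y, HasFDerivAt F (F' y) y := fun y =>
    ((hasFDerivAt_Ds pr dpr s y).sub (hasFDerivAt_Ds qr dqr s y)).mul
      ((hasFDerivAt_Ds u1 du1 s y).sub (hasFDerivAt_Ds v1 dv1 s y))
  have hGd : ∀ y, HasFDerivAt G (G' y) y := fun y =>
    ((hasFDerivAt_Ds pr dpr s y).sub (hasFDerivAt_Ds qr dqr s y)).mul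
      ((hasFDerivAt_Ds u2 du2 s y).sub (hasFDerivAt_Ds v2 dv2 s y))
  have KK : ∀ y, F' y (1, 0) + G' y (0, 1) =
      D2 u1 u2 pr v1 v2 qr (s, y)
        + (pr (s, y) - qr (s, y)) *
          ((sd1 u1 (s, y) + sd2 u2 (s, y)) - (sd1 v1 (s, y) + sd2 v2 (s, y))) := by
    intro y
    simp only [hF', hG', ContinuousLinearMap.add_apply, ContinuousLinearMap.smul_apply,
      ContinuousLinearMap.sub_apply, smul_eq_mul, Ds_apply1 u1 du1 s, Ds_apply1 v1 dv1 s,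
      Ds_apply1 pr dpr s, Ds_apply1 qr dqr s, Ds_apply2 u2 du2 s, Ds_apply2 v2 dv2 s,
      Ds_apply2 pr dpr s, Ds_apply2 qr dqr s, D2]
    ring
  have hEq : EqOn (fun y => D2 u1 u2 pr v1 v2 qr (s, y))
      (fun y => F' y (1, 0) + G' y (0, 1)) (OmegaR R) := by
    intro y hy
    have hdf := hsol.divfree (s, y) (Set.mem_prod.2 ⟨hs, hy⟩)
    have hdf' := hsol'.divfree (s, y) (Set.mem_prod.2 ⟨hs, hy⟩)
    simp only
    rw [KK y, hdf, hdf']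
    ring
  have hi : Continuous fun y => F' y (1, 0) + G' y (0, 1) := by
    have c1 : Continuous fun y : ℝ × ℝ => ((s, y) : ℝ × ℝ × ℝ) :=
      continuous_const.prodMk continuous_id
    have := (cont_D2 hsol hsol').comp c1
    have := (cont_sd1 u1 hsol.regu1).comp c1
    have := (cont_sd2 u2 hsol.regu2).comp c1
    have := (cont_sd1 v1 hsol'.regu1).comp c1
    have := (cont_sd2 v2 hsol'.regu2).comp c1
    have := hsol.regp.continuous.comp c1
    have := hsol'.regp.continuous.comp c1
    have hcc : Continuous fun y : ℝ × ℝ => D2 u1 u2 pr v1 v2 qr (s, y)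
        + (pr (s, y) - qr (s, y)) *
          ((sd1 u1 (s, y) + sd2 u2 (s, y)) - (sd1 v1 (s, y) + sd2 v2 (s, y))) :=
      ((cont_D2 hsol hsol').comp c1).add (((hsol.regp.continuous.comp c1).sub
        (hsol'.regp.continuous.comp c1)).mul
        ((((cont_sd1 u1 hsol.regu1).comp c1).add ((cont_sd2 u2 hsol.regu2).comp c1)).sub
          (((cont_sd1 v1 hsol'.regu1).comp c1).add ((cont_sd2 v2 hsol'.regu2).comp c1))))
    exact hcc.congr fun y => (KK y).symm
  have hbc := fun (x : ℝ) (hx : x ∈ Icc (-R) R) => hsol.bc_tb s hs x hx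
  have hbc' := fun (x : ℝ) (hx : x ∈ Icc (-R) R) => hsol'.bc_tb s hs x hx
  have hlat := fun (t : ℝ) (ht : t ∈ Icc (0:ℝ) 1) => hsol.bc_lat s hs t ht
  have hlat' := fun (t : ℝ) (ht : t ∈ Icc (0:ℝ) 1) => hsol'.bc_lat s hs t ht
  have hRR : -R ≤ R := by linarith
  have b1 : (∫ x in (-R)..R, G (x, 1)) = 0 := by
    rw [intervalIntegral.integral_congr (g := fun _ => (0:ℝ)) ?_, intervalIntegral.integral_zero]
    intro x hx
    rw [uIcc_of_le hRR] at hx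
    simp only [hG, (hbc x hx).2.1, (hbc' x hx).2.1]
    ring
  have b2 : (∫ x in (-R)..R, G (x, 0)) = 0 := by
    rw [intervalIntegral.integral_congr (g := fun _ => (0:ℝ)) ?_, intervalIntegral.integral_zero]
    intro x hx
    rw [uIcc_of_le hRR] at hx
    simp only [hG, (hbc x hx).1, (hbc' x hx).1]
    ring
  have b3 : (∫ t in (0:ℝ)..1, F (R, t)) = 0 := by
    rw [intervalIntegral.integral_congr (g := fun _ => (0:ℝ)) ?_, intervalIntegral.integral_zero]
    intro t ht
    rw [uIcc_of_le (by norm_num : (0:ℝ) ≤ 1)] at ht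
    simp only [hF, (hlat t ht).1, (hlat' t ht).1]
    ring
  have b4 : (∫ t in (0:ℝ)..1, F (-R, t)) = 0 := by
    rw [intervalIntegral.integral_congr (g := fun _ => (0:ℝ)) ?_, intervalIntegral.integral_zero]
    intro t ht
    rw [uIcc_of_le (by norm_num : (0:ℝ) ≤ 1)] at ht
    simp only [hF, (hlat t ht).2.1, (hlat' t ht).2.1]
    ring
  calc ∫ y in OmegaR R, D2 u1 u2 pr v1 v2 qr (s, y)
      = ∫ y in OmegaR R, (F' y (1, 0) + G' y (0, 1)) :=
        setIntegral_congr_fun (omegaR_measurable R) hEq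
    _ = (((∫ x in (-R)..R, G (x, 1)) - ∫ x in (-R)..R, G (x, 0)) +
          ∫ t in (0:ℝ)..1, F (R, t)) - ∫ t in (0:ℝ)..1, F (-R, t) :=
        omegaR_divergence R hR F G F' G' hFd hGd hi
    _ = 0 := by rw [b1, b2, b3, b4]; ring

theorem integral_D1_eq_zero {T R μ k0 k1 g1 g2 : ℝ} {u1 u2 pr θ v1 v2 qr θ' : ℝ × ℝ × ℝ → ℝ}
    (hsol : IsBoussinesqSolution T R μ k0 k1 g1 g2 u1 u2 pr θ)
    (hsol' : IsBoussinesqSolution T R μ k0 k1 g1 g2 v1 v2 qr θ')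
    (hR : 0 < R) {s : ℝ} (hs : s ∈ Icc (0:ℝ) T) :
    ∫ y in OmegaR R, D1 u1 u2 θ v1 v2 θ' (s, y) = 0 := by
  have du1 := hsol.regu1.differentiable one_ne_zero
  have du2 := hsol.regu2.differentiable one_ne_zero
  have dθ := hsol.regθ.differentiable one_ne_zero
  have dv1 := hsol'.regu1.differentiable one_ne_zero
  have dv2 := hsol'.regu2.differentiable one_ne_zero
  have dθ' := hsol'.regθ.differentiable one_ne_zero
  set DP : ℝ × ℝ → (ℝ × ℝ) →L[ℝ] ℝ := fun y =>
    ((u1 (s, y) - v1 (s, y)) • (Ds u1 s y - Ds v1 s y)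
        + (u1 (s, y) - v1 (s, y)) • (Ds u1 s y - Ds v1 s y)
      + ((u2 (s, y) - v2 (s, y)) • (Ds u2 s y - Ds v2 s y)
        + (u2 (s, y) - v2 (s, y)) • (Ds u2 s y - Ds v2 s y)))
      + ((θ (s, y) - θ' (s, y)) • (Ds θ s y - Ds θ' s y)
        + (θ (s, y) - θ' (s, y)) • (Ds θ s y - Ds θ' s y)) with hDP
  have hPd : ∀ y, HasFDerivAt (fun y : ℝ × ℝ => Phi u1 u2 θ v1 v2 θ' (s, y)) (DP y) y := by
    intro y
    have h1 := (hasFDerivAt_Ds u1 du1 s y).sub (hasFDerivAt_Ds v1 dv1 s y)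
    have h2 := (hasFDerivAt_Ds u2 du2 s y).sub (hasFDerivAt_Ds v2 dv2 s y)
    have h3 := (hasFDerivAt_Ds θ dθ s y).sub (hasFDerivAt_Ds θ' dθ' s y)
    have := ((h1.mul h1).add (h2.mul h2)).add (h3.mul h3)
    simp only [Phi, pow_two]
    exact this
  set F : ℝ × ℝ → ℝ := fun y => u1 (s, y) * Phi u1 u2 θ v1 v2 θ' (s, y) with hF
  set G : ℝ × ℝ → ℝ := fun y => u2 (s, y) * Phi u1 u2 θ v1 v2 θ' (s, y) with hG
  set F' : ℝ × ℝ → (ℝ × ℝ) →L[ℝ] ℝ := fun y =>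
    u1 (s, y) • DP y + Phi u1 u2 θ v1 v2 θ' (s, y) • Ds u1 s y with hF'
  set G' : ℝ × ℝ → (ℝ × ℝ) →L[ℝ] ℝ := fun y =>
    u2 (s, y) • DP y + Phi u1 u2 θ v1 v2 θ' (s, y) • Ds u2 s y with hG'
  have hFd : ∀ y, HasFDerivAt F (F' y) y := fun y =>
    (hasFDerivAt_Ds u1 du1 s y).mul (hPd y)
  have hGd : ∀ y, HasFDerivAt G (G' y) y := fun y =>
    (hasFDerivAt_Ds u2 du2 s y).mul (hPd y)
  have KK : ∀ y, F' y (1, 0) + G' y (0, 1) =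
      D1 u1 u2 θ v1 v2 θ' (s, y)
        + Phi u1 u2 θ v1 v2 θ' (s, y) * (sd1 u1 (s, y) + sd2 u2 (s, y)) := by
    intro y
    simp only [hF', hG', hDP, ContinuousLinearMap.add_apply, ContinuousLinearMap.smul_apply,
      ContinuousLinearMap.sub_apply, smul_eq_mul, Ds_apply1 u1 du1 s, Ds_apply1 v1 dv1 s,
      Ds_apply1 u2 du2 s, Ds_apply1 v2 dv2 s, Ds_apply1 θ dθ s, Ds_apply1 θ' dθ' s,
      Ds_apply2 u1 du1 s, Ds_apply2 v1 dv1 s, Ds_apply2 u2 du2 s, Ds_apply2 v2 dv2 s,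
      Ds_apply2 θ dθ s, Ds_apply2 θ' dθ' s, D1, GP1, GP2]
    ring
  have hEq : EqOn (fun y => D1 u1 u2 θ v1 v2 θ' (s, y))
      (fun y => F' y (1, 0) + G' y (0, 1)) (OmegaR R) := by
    intro y hy
    have hdf := hsol.divfree (s, y) (Set.mem_prod.2 ⟨hs, hy⟩)
    simp only
    rw [KK y, hdf]
    ring
  have hi : Continuous fun y => F' y (1, 0) + G' y (0, 1) := by
    have c1 : Continuous fun y : ℝ × ℝ => ((s, y) : ℝ × ℝ × ℝ) :=
      continuous_const.prodMk continuous_id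
    have := (cont_D1 hsol hsol').comp c1
    have := (cont_Phi hsol hsol').comp c1
    have := (cont_sd1 u1 hsol.regu1).comp c1
    have := (cont_sd2 u2 hsol.regu2).comp c1
    have hcc : Continuous fun y : ℝ × ℝ => D1 u1 u2 θ v1 v2 θ' (s, y)
        + Phi u1 u2 θ v1 v2 θ' (s, y) * (sd1 u1 (s, y) + sd2 u2 (s, y)) := by
      fun_prop
    exact hcc.congr fun y => (KK y).symm
  have hbc := fun (x : ℝ) (hx : x ∈ Icc (-R) R) => hsol.bc_tb s hs x hx
  have hlat := fun (t : ℝ) (ht : t ∈ Icc (0:ℝ) 1) => hsol.bc_lat s hs t ht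
  have hRR : -R ≤ R := by linarith
  have b1 : (∫ x in (-R)..R, G (x, 1)) = 0 := by
    rw [intervalIntegral.integral_congr (g := fun _ => (0:ℝ)) ?_, intervalIntegral.integral_zero]
    intro x hx
    rw [uIcc_of_le hRR] at hx
    simp only [hG, (hbc x hx).2.1]
    ring
  have b2 : (∫ x in (-R)..R, G (x, 0)) = 0 := by
    rw [intervalIntegral.integral_congr (g := fun _ => (0:ℝ)) ?_, intervalIntegral.integral_zero]
    intro x hx
    rw [uIcc_of_le hRR] at hx
    simp only [hG, (hbc x hx).1]
    ring
  have b3 : (∫ t in (0:ℝ)..1, F (R, t)) = 0 := by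
    rw [intervalIntegral.integral_congr (g := fun _ => (0:ℝ)) ?_, intervalIntegral.integral_zero]
    intro t ht
    rw [uIcc_of_le (by norm_num : (0:ℝ) ≤ 1)] at ht
    simp only [hF, (hlat t ht).1]
    ring
  have b4 : (∫ t in (0:ℝ)..1, F (-R, t)) = 0 := by
    rw [intervalIntegral.integral_congr (g := fun _ => (0:ℝ)) ?_, intervalIntegral.integral_zero]
    intro t ht
    rw [uIcc_of_le (by norm_num : (0:ℝ) ≤ 1)] at ht
    simp only [hF, (hlat t ht).2.1]
    ring
  calc ∫ y in OmegaR R, D1 u1 u2 θ v1 v2 θ' (s, y)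
      = ∫ y in OmegaR R, (F' y (1, 0) + G' y (0, 1)) :=
        setIntegral_congr_fun (omegaR_measurable R) hEq
    _ = (((∫ x in (-R)..R, G (x, 1)) - ∫ x in (-R)..R, G (x, 0)) +
          ∫ t in (0:ℝ)..1, F (R, t)) - ∫ t in (0:ℝ)..1, F (-R, t) :=
        omegaR_divergence R hR F G F' G' hFd hGd hi
    _ = 0 := by rw [b1, b2, b3, b4]; ring

set_option maxHeartbeats 1000000 in
theorem integral_D3_nonpos {T R μ k0 k1 g1 g2 : ℝ} {u1 u2 pr θ v1 v2 qr θ' : ℝ × ℝ × ℝ → ℝ}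
    (hsol : IsBoussinesqSolution T R μ k0 k1 g1 g2 u1 u2 pr θ)
    (hsol' : IsBoussinesqSolution T R μ k0 k1 g1 g2 v1 v2 qr θ')
    (hR : 0 < R) (hμ : 0 < μ) (hk0 : k0 ≤ 0) (hk1 : k1 ≤ 0) {s : ℝ} (hs : s ∈ Icc (0:ℝ) T) :
    ∫ y in OmegaR R, D3 u1 u2 v1 v2 (s, y) ≤ 0 := by
  have du1 := hsol.regu1.differentiable one_ne_zero
  have du2 := hsol.regu2.differentiable one_ne_zero
  have dv1 := hsol'.regu1.differentiable one_ne_zero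
  have dv2 := hsol'.regu2.differentiable one_ne_zero
  set A1 : ℝ × ℝ → ℝ := fun y => sd1 u1 (s, y) - sd1 v1 (s, y) with hA1
  set A2 : ℝ × ℝ → ℝ := fun y => sd1 u2 (s, y) - sd1 v2 (s, y) with hA2
  set B1 : ℝ × ℝ → ℝ := fun y => sd2 u1 (s, y) - sd2 v1 (s, y) with hB1
  set B2 : ℝ × ℝ → ℝ := fun y => sd2 u2 (s, y) - sd2 v2 (s, y) with hB2
  set DA1 : ℝ × ℝ → (ℝ × ℝ) →L[ℝ] ℝ := fun y =>
    fderiv ℝ (fun y : ℝ × ℝ => sd1 u1 (s, y)) y - fderiv ℝ (fun y : ℝ × ℝ => sd1 v1 (s, y)) y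
    with hDA1
  set DA2 : ℝ × ℝ → (ℝ × ℝ) →L[ℝ] ℝ := fun y =>
    fderiv ℝ (fun y : ℝ × ℝ => sd1 u2 (s, y)) y - fderiv ℝ (fun y : ℝ × ℝ => sd1 v2 (s, y)) y
    with hDA2
  set DB1 : ℝ × ℝ → (ℝ × ℝ) →L[ℝ] ℝ := fun y =>
    fderiv ℝ (fun y : ℝ × ℝ => sd2 u1 (s, y)) y - fderiv ℝ (fun y : ℝ × ℝ => sd2 v1 (s, y)) y
    with hDB1
  set DB2 : ℝ × ℝ → (ℝ × ℝ) →L[ℝ] ℝ := fun y =>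
    fderiv ℝ (fun y : ℝ × ℝ => sd2 u2 (s, y)) y - fderiv ℝ (fun y : ℝ × ℝ => sd2 v2 (s, y)) y
    with hDB2
  have hA1d : ∀ y, HasFDerivAt A1 (DA1 y) y := fun y =>
    (hasFDerivAt_sd1_sl u1 s (hsol.regu1x s) y).sub (hasFDerivAt_sd1_sl v1 s (hsol'.regu1x s) y)
  have hA2d : ∀ y, HasFDerivAt A2 (DA2 y) y := fun y =>
    (hasFDerivAt_sd1_sl u2 s (hsol.regu2x s) y).sub (hasFDerivAt_sd1_sl v2 s (hsol'.regu2x s) y)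
  have hB1d : ∀ y, HasFDerivAt B1 (DB1 y) y := fun y =>
    (hasFDerivAt_sd2_sl u1 s (hsol.regu1x s) y).sub (hasFDerivAt_sd2_sl v1 s (hsol'.regu1x s) y)
  have hB2d : ∀ y, HasFDerivAt B2 (DB2 y) y := fun y =>
    (hasFDerivAt_sd2_sl u2 s (hsol.regu2x s) y).sub (hasFDerivAt_sd2_sl v2 s (hsol'.regu2x s) y)
  set F : ℝ × ℝ → ℝ := fun y => (u1 (s, y) - v1 (s, y)) * A1 y + (u2 (s, y) - v2 (s, y)) * A2 y
    with hF
  set G : ℝ × ℝ → ℝ := fun y => (u1 (s, y) - v1 (s, y)) * B1 y + (u2 (s, y) - v2 (s, y)) * B2 y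
    with hG
  set F' : ℝ × ℝ → (ℝ × ℝ) →L[ℝ] ℝ := fun y =>
    ((u1 (s, y) - v1 (s, y)) • DA1 y + A1 y • (Ds u1 s y - Ds v1 s y))
      + ((u2 (s, y) - v2 (s, y)) • DA2 y + A2 y • (Ds u2 s y - Ds v2 s y)) with hF'
  set G' : ℝ × ℝ → (ℝ × ℝ) →L[ℝ] ℝ := fun y =>
    ((u1 (s, y) - v1 (s, y)) • DB1 y + B1 y • (Ds u1 s y - Ds v1 s y))
      + ((u2 (s, y) - v2 (s, y)) • DB2 y + B2 y • (Ds u2 s y - Ds v2 s y)) with hG'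
  have hFd : ∀ y, HasFDerivAt F (F' y) y := fun y =>
    (((hasFDerivAt_Ds u1 du1 s y).sub (hasFDerivAt_Ds v1 dv1 s y)).mul (hA1d y)).add
      (((hasFDerivAt_Ds u2 du2 s y).sub (hasFDerivAt_Ds v2 dv2 s y)).mul (hA2d y))
  have hGd : ∀ y, HasFDerivAt G (G' y) y := fun y =>
    (((hasFDerivAt_Ds u1 du1 s y).sub (hasFDerivAt_Ds v1 dv1 s y)).mul (hB1d y)).add
      (((hasFDerivAt_Ds u2 du2 s y).sub (hasFDerivAt_Ds v2 dv2 s y)).mul (hB2d y))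
  have KK : ∀ y, F' y (1, 0) + G' y (0, 1) =
      D3 u1 u2 v1 v2 (s, y) + (A1 y ^ 2 + A2 y ^ 2 + B1 y ^ 2 + B2 y ^ 2) := by
    intro y
    simp only [hF', hG', hDA1, hDA2, hDB1, hDB2, ContinuousLinearMap.add_apply,
      ContinuousLinearMap.smul_apply, ContinuousLinearMap.sub_apply, smul_eq_mul,
      fderiv_sd1_sl_apply1, fderiv_sd2_sl_apply2,
      Ds_apply1 u1 du1 s, Ds_apply1 v1 dv1 s, Ds_apply1 u2 du2 s, Ds_apply1 v2 dv2 s,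
      Ds_apply2 u1 du1 s, Ds_apply2 v1 dv1 s, Ds_apply2 u2 du2 s, Ds_apply2 v2 dv2 s,
      D3, hA1, hA2, hB1, hB2]
    ring
  have c1 : Continuous fun y : ℝ × ℝ => ((s, y) : ℝ × ℝ × ℝ) :=
    continuous_const.prodMk continuous_id
  have cu1 := hsol.regu1.continuous.comp c1
  have cu2 := hsol.regu2.continuous.comp c1
  have cv1 := hsol'.regu1.continuous.comp c1
  have cv2 := hsol'.regu2.continuous.comp c1
  have cA1 : Continuous A1 :=
    ((cont_sd1 u1 hsol.regu1).comp c1).sub ((cont_sd1 v1 hsol'.regu1).comp c1)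
  have cA2 : Continuous A2 :=
    ((cont_sd1 u2 hsol.regu2).comp c1).sub ((cont_sd1 v2 hsol'.regu2).comp c1)
  have cB1 : Continuous B1 :=
    ((cont_sd2 u1 hsol.regu1).comp c1).sub ((cont_sd2 v1 hsol'.regu1).comp c1)
  have cB2 : Continuous B2 :=
    ((cont_sd2 u2 hsol.regu2).comp c1).sub ((cont_sd2 v2 hsol'.regu2).comp c1)
  have cD3 := (cont_D3 hsol hsol').comp c1
  have cQ : Continuous fun y => A1 y ^ 2 + A2 y ^ 2 + B1 y ^ 2 + B2 y ^ 2 := by fun_prop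
  have hi : Continuous fun y => F' y (1, 0) + G' y (0, 1) := by
    have hcc : Continuous fun y : ℝ × ℝ => D3 u1 u2 v1 v2 (s, y)
        + (A1 y ^ 2 + A2 y ^ 2 + B1 y ^ 2 + B2 y ^ 2) := by fun_prop
    exact hcc.congr fun y => (KK y).symm
  have hOmc : IsCompact (OmegaR R) := by rw [omega_eq]; exact isCompact_Icc
  have iD3 : IntegrableOn (fun y => D3 u1 u2 v1 v2 (s, y)) (OmegaR R) :=
    cD3.continuousOn.integrableOn_compact hOmc
  have iQ : IntegrableOn (fun y => A1 y ^ 2 + A2 y ^ 2 + B1 y ^ 2 + B2 y ^ 2) (OmegaR R) :=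
    cQ.continuousOn.integrableOn_compact hOmc
  have split : ∫ y in OmegaR R, (F' y (1, 0) + G' y (0, 1)) =
      (∫ y in OmegaR R, D3 u1 u2 v1 v2 (s, y))
        + ∫ y in OmegaR R, (A1 y ^ 2 + A2 y ^ 2 + B1 y ^ 2 + B2 y ^ 2) := by
    rw [← integral_add iD3 iQ]
    exact setIntegral_congr_fun (omegaR_measurable R) fun y _ => KK y
  have hbc := fun (x : ℝ) (hx : x ∈ Icc (-R) R) => hsol.bc_tb s hs x hx
  have hbc' := fun (x : ℝ) (hx : x ∈ Icc (-R) R) => hsol'.bc_tb s hs x hx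
  have hlat := fun (t : ℝ) (ht : t ∈ Icc (0:ℝ) 1) => hsol.bc_lat s hs t ht
  have hlat' := fun (t : ℝ) (ht : t ∈ Icc (0:ℝ) 1) => hsol'.bc_lat s hs t ht
  have hRR : -R ≤ R := by linarith
  have hk1μ : k1 / μ ≤ 0 := by rw [div_nonpos_iff]; exact Or.inr ⟨hk1, hμ.le⟩
  have hk0μ : k0 / μ ≤ 0 := by rw [div_nonpos_iff]; exact Or.inr ⟨hk0, hμ.le⟩
  have b1 : (∫ x in (-R)..R, G (x, 1)) ≤ 0 := by
    have : (∫ x in (-R)..R, G (x, 1)) =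
        ∫ x in (-R)..R, (k1 / μ) * (u1 (s, x, 1) - v1 (s, x, 1)) ^ 2 := by
      refine intervalIntegral.integral_congr fun x hx => ?_
      rw [uIcc_of_le hRR] at hx
      simp only [hG, hB1, hB2, (hbc x hx).2.1, (hbc' x hx).2.1, (hbc x hx).2.2.1,
        (hbc' x hx).2.2.1]
      ring
    rw [this, intervalIntegral.integral_const_mul]
    have h2 : (0:ℝ) ≤ ∫ x in (-R)..R, (u1 (s, x, 1) - v1 (s, x, 1)) ^ 2 :=
      intervalIntegral.integral_nonneg hRR fun x _ => sq_nonneg _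
    exact mul_nonpos_iff.2 (Or.inr ⟨hk1μ, h2⟩)
  have b2 : (0:ℝ) ≤ ∫ x in (-R)..R, G (x, 0) := by
    have : (∫ x in (-R)..R, G (x, 0)) =
        ∫ x in (-R)..R, (-(k0 / μ)) * (u1 (s, x, 0) - v1 (s, x, 0)) ^ 2 := by
      refine intervalIntegral.integral_congr fun x hx => ?_
      rw [uIcc_of_le hRR] at hx
      simp only [hG, hB1, hB2, (hbc x hx).1, (hbc' x hx).1, (hbc x hx).2.2.2,
        (hbc' x hx).2.2.2]
      ring
    rw [this, intervalIntegral.integral_const_mul]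
    have h2 : (0:ℝ) ≤ ∫ x in (-R)..R, (u1 (s, x, 0) - v1 (s, x, 0)) ^ 2 :=
      intervalIntegral.integral_nonneg hRR fun x _ => sq_nonneg _
    exact mul_nonneg (by linarith) h2
  have b3 : (∫ t in (0:ℝ)..1, F (R, t)) = 0 := by
    rw [intervalIntegral.integral_congr (g := fun _ => (0:ℝ)) ?_, intervalIntegral.integral_zero]
    intro t ht
    rw [uIcc_of_le (by norm_num : (0:ℝ) ≤ 1)] at ht
    simp only [hF, (hlat t ht).1, (hlat' t ht).1, (hlat t ht).2.2.1, (hlat' t ht).2.2.1]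
    ring
  have b4 : (∫ t in (0:ℝ)..1, F (-R, t)) = 0 := by
    rw [intervalIntegral.integral_congr (g := fun _ => (0:ℝ)) ?_, intervalIntegral.integral_zero]
    intro t ht
    rw [uIcc_of_le (by norm_num : (0:ℝ) ≤ 1)] at ht
    simp only [hF, (hlat t ht).2.1, (hlat' t ht).2.1, (hlat t ht).2.2.2, (hlat' t ht).2.2.2]
    ring
  have qpos : (0:ℝ) ≤ ∫ y in OmegaR R, (A1 y ^ 2 + A2 y ^ 2 + B1 y ^ 2 + B2 y ^ 2) :=
    setIntegral_nonneg (omegaR_measurable R) fun y _ => by positivity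
  have hdiv := omegaR_divergence R hR F G F' G' hFd hGd hi
  rw [split] at hdiv
  linarith [hdiv, b1, b2, b3, b4, qpos]

theorem pair_bound {c C x y : ℝ} (h : |c| ≤ C) : 2 * (c * x * y) ≤ C * (x ^ 2 + y ^ 2) := by
  obtain ⟨h1, h2⟩ := abs_le.1 h
  nlinarith [mul_nonneg (by linarith : (0:ℝ) ≤ C - c) (sq_nonneg (x + y)),
    mul_nonneg (by linarith : (0:ℝ) ≤ C + c) (sq_nonneg (x - y))]

set_option maxHeartbeats 1000000 in
theorem bulk_bound {T R μ k0 k1 g1 g2 : ℝ} {u1 u2 pr θ v1 v2 qr θ' : ℝ × ℝ × ℝ → ℝ}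
    (hsol : IsBoussinesqSolution T R μ k0 k1 g1 g2 u1 u2 pr θ)
    (hsol' : IsBoussinesqSolution T R μ k0 k1 g1 g2 v1 v2 qr θ')
    (hT : 0 < T) (hR : 0 < R) :
    ∃ C : ℝ, 0 ≤ C ∧ ∀ p ∈ (Icc (0:ℝ) T) ×ˢ OmegaR R,
      Bulk g1 g2 u1 u2 θ v1 v2 θ' p ≤ C * Phi u1 u2 θ v1 v2 θ' p := by
  have hK : IsCompact ((Icc (0:ℝ) T) ×ˢ OmegaR R) := by
    rw [omega_eq]; exact isCompact_Icc.prod isCompact_Icc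
  have hRR : -R ≤ R := by linarith
  have hne : ((0:ℝ), ((-R:ℝ), (0:ℝ))) ∈ (Icc (0:ℝ) T) ×ˢ OmegaR R :=
    ⟨⟨le_rfl, hT.le⟩, ⟨le_rfl, hRR⟩, ⟨le_rfl, by norm_num⟩⟩
  obtain ⟨M1, hM1⟩ := hK.exists_bound_of_continuousOn (cont_sd1 v1 hsol'.regu1).continuousOn
  obtain ⟨M2, hM2⟩ := hK.exists_bound_of_continuousOn (cont_sd2 v1 hsol'.regu1).continuousOn
  obtain ⟨M3, hM3⟩ := hK.exists_bound_of_continuousOn (cont_sd1 v2 hsol'.regu2).continuousOn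
  obtain ⟨M4, hM4⟩ := hK.exists_bound_of_continuousOn (cont_sd2 v2 hsol'.regu2).continuousOn
  obtain ⟨M5, hM5⟩ := hK.exists_bound_of_continuousOn (cont_sd1 θ' hsol'.regθ).continuousOn
  obtain ⟨M6, hM6⟩ := hK.exists_bound_of_continuousOn (cont_sd2 θ' hsol'.regθ).continuousOn
  set C0 : ℝ := M1 + M2 + M3 + M4 + M5 + M6 + |g1| + |g2| with hC0
  have n1 : (0:ℝ) ≤ M1 := (norm_nonneg _).trans (hM1 _ hne)
  have n2 : (0:ℝ) ≤ M2 := (norm_nonneg _).trans (hM2 _ hne)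
  have n3 : (0:ℝ) ≤ M3 := (norm_nonneg _).trans (hM3 _ hne)
  have n4 : (0:ℝ) ≤ M4 := (norm_nonneg _).trans (hM4 _ hne)
  have n5 : (0:ℝ) ≤ M5 := (norm_nonneg _).trans (hM5 _ hne)
  have n6 : (0:ℝ) ≤ M6 := (norm_nonneg _).trans (hM6 _ hne)
  have ag1 : (0:ℝ) ≤ |g1| := abs_nonneg _
  have ag2 : (0:ℝ) ≤ |g2| := abs_nonneg _
  have hC0nn : 0 ≤ C0 := by rw [hC0]; linarith
  refine ⟨6 * C0, by linarith, fun p hp => ?_⟩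
  have f1 : |sd1 v1 p| ≤ C0 := by
    have := hM1 p hp; rw [Real.norm_eq_abs] at this; rw [hC0]; linarith
  have f2 : |sd2 v1 p| ≤ C0 := by
    have := hM2 p hp; rw [Real.norm_eq_abs] at this; rw [hC0]; linarith
  have f3 : |sd1 v2 p| ≤ C0 := by
    have := hM3 p hp; rw [Real.norm_eq_abs] at this; rw [hC0]; linarith
  have f4 : |sd2 v2 p| ≤ C0 := by
    have := hM4 p hp; rw [Real.norm_eq_abs] at this; rw [hC0]; linarith
  have f5 : |sd1 θ' p| ≤ C0 := by
    have := hM5 p hp; rw [Real.norm_eq_abs] at this; rw [hC0]; linarith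
  have f6 : |sd2 θ' p| ≤ C0 := by
    have := hM6 p hp; rw [Real.norm_eq_abs] at this; rw [hC0]; linarith
  have f7 : |g1| ≤ C0 := by rw [hC0]; linarith
  have f8 : |g2| ≤ C0 := by rw [hC0]; linarith
  set W1 := u1 p - v1 p
  set W2 := u2 p - v2 p
  set N := θ p - θ' p
  have e1 : 2 * (-(sd1 v1 p) * W1 * W1) ≤ C0 * (W1 ^ 2 + W1 ^ 2) :=
    pair_bound (by rw [abs_neg]; exact f1)
  have e2 : 2 * (-(sd2 v1 p) * W1 * W2) ≤ C0 * (W1 ^ 2 + W2 ^ 2) :=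
    pair_bound (by rw [abs_neg]; exact f2)
  have e3 : 2 * (-(sd1 v2 p) * W1 * W2) ≤ C0 * (W1 ^ 2 + W2 ^ 2) :=
    pair_bound (by rw [abs_neg]; exact f3)
  have e4 : 2 * (-(sd2 v2 p) * W2 * W2) ≤ C0 * (W2 ^ 2 + W2 ^ 2) :=
    pair_bound (by rw [abs_neg]; exact f4)
  have e5 : 2 * (-(sd1 θ' p) * N * W1) ≤ C0 * (N ^ 2 + W1 ^ 2) :=
    pair_bound (by rw [abs_neg]; exact f5)
  have e6 : 2 * (-(sd2 θ' p) * N * W2) ≤ C0 * (N ^ 2 + W2 ^ 2) :=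
    pair_bound (by rw [abs_neg]; exact f6)
  have e7 : 2 * (g1 * N * W1) ≤ C0 * (N ^ 2 + W1 ^ 2) :=
    pair_bound f7
  have e8 : 2 * (g2 * N * W2) ≤ C0 * (N ^ 2 + W2 ^ 2) :=
    pair_bound f8
  have hBdec : Bulk g1 g2 u1 u2 θ v1 v2 θ' p =
      2 * (-(sd1 v1 p) * W1 * W1) + 2 * (-(sd2 v1 p) * W1 * W2)
        + 2 * (-(sd1 v2 p) * W1 * W2) + 2 * (-(sd2 v2 p) * W2 * W2)
        + 2 * (-(sd1 θ' p) * N * W1) + 2 * (-(sd2 θ' p) * N * W2)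
        + 2 * (g1 * N * W1) + 2 * (g2 * N * W2) := by
    simp only [Bulk]; ring
  have hPdec : Phi u1 u2 θ v1 v2 θ' p = W1 ^ 2 + W2 ^ 2 + N ^ 2 := rfl
  rw [hBdec, hPdec]
  nlinarith [sq_nonneg W1, sq_nonneg W2, sq_nonneg N,
    mul_nonneg hC0nn (sq_nonneg N), mul_nonneg hC0nn (sq_nonneg W1),
    mul_nonneg hC0nn (sq_nonneg W2)]

theorem key_ineq {T R μ k0 k1 g1 g2 : ℝ} {u1 u2 pr θ v1 v2 qr θ' : ℝ × ℝ × ℝ → ℝ}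
    (hsol : IsBoussinesqSolution T R μ k0 k1 g1 g2 u1 u2 pr θ)
    (hsol' : IsBoussinesqSolution T R μ k0 k1 g1 g2 v1 v2 qr θ')
    (hT : 0 < T) (hR : 0 < R) (hμ : 0 < μ) (hk0 : k0 ≤ 0) (hk1 : k1 ≤ 0) :
    ∃ C : ℝ, 0 ≤ C ∧ ∀ s ∈ Icc (0:ℝ) T,
      (∫ y in OmegaR R, Hf u1 u2 θ v1 v2 θ' (s, y)) ≤
        C * ∫ y in OmegaR R, Phi u1 u2 θ v1 v2 θ' (s, y) := by
  obtain ⟨C, hC0, hC⟩ := bulk_bound hsol hsol' hT hR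
  refine ⟨C, hC0, fun s hs => ?_⟩
  have c1 : Continuous fun y : ℝ × ℝ => ((s, y) : ℝ × ℝ × ℝ) :=
    continuous_const.prodMk continuous_id
  have hOmc : IsCompact (OmegaR R) := by rw [omega_eq]; exact isCompact_Icc
  have i1 : IntegrableOn (fun y => D1 u1 u2 θ v1 v2 θ' (s, y)) (OmegaR R) :=
    (((cont_D1 hsol hsol').comp c1).continuousOn).integrableOn_compact hOmc
  have i2 : IntegrableOn (fun y => D2 u1 u2 pr v1 v2 qr (s, y)) (OmegaR R) :=
    (((cont_D2 hsol hsol').comp c1).continuousOn).integrableOn_compact hOmc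
  have i3 : IntegrableOn (fun y => D3 u1 u2 v1 v2 (s, y)) (OmegaR R) :=
    (((cont_D3 hsol hsol').comp c1).continuousOn).integrableOn_compact hOmc
  have i4 : IntegrableOn (fun y => Bulk g1 g2 u1 u2 θ v1 v2 θ' (s, y)) (OmegaR R) :=
    (((cont_Bulk hsol hsol').comp c1).continuousOn).integrableOn_compact hOmc
  have iP : IntegrableOn (fun y => Phi u1 u2 θ v1 v2 θ' (s, y)) (OmegaR R) :=
    (((cont_Phi hsol hsol').comp c1).continuousOn).integrableOn_compact hOmc
  have step1 : (∫ y in OmegaR R, Hf u1 u2 θ v1 v2 θ' (s, y)) =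
      ∫ y in OmegaR R, (-(D1 u1 u2 θ v1 v2 θ' (s, y)) - 2 * D2 u1 u2 pr v1 v2 qr (s, y)
        + 2 * μ * D3 u1 u2 v1 v2 (s, y) + Bulk g1 g2 u1 u2 θ v1 v2 θ' (s, y)) := by
    refine setIntegral_congr_fun (omegaR_measurable R) fun y hy => ?_
    exact Hf_eq hsol hsol' (Set.mem_prod.2 ⟨hs, hy⟩)
  have step2 : (∫ y in OmegaR R, (-(D1 u1 u2 θ v1 v2 θ' (s, y))
        - 2 * D2 u1 u2 pr v1 v2 qr (s, y) + 2 * μ * D3 u1 u2 v1 v2 (s, y)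
        + Bulk g1 g2 u1 u2 θ v1 v2 θ' (s, y))) =
      -(∫ y in OmegaR R, D1 u1 u2 θ v1 v2 θ' (s, y))
        - 2 * (∫ y in OmegaR R, D2 u1 u2 pr v1 v2 qr (s, y))
        + 2 * μ * (∫ y in OmegaR R, D3 u1 u2 v1 v2 (s, y))
        + ∫ y in OmegaR R, Bulk g1 g2 u1 u2 θ v1 v2 θ' (s, y) := by
    have hN : IntegrableOn (fun y => -(D1 u1 u2 θ v1 v2 θ' (s, y))) (OmegaR R) := i1.neg
    have hA1 : IntegrableOn (fun y => -(D1 u1 u2 θ v1 v2 θ' (s, y))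
        - 2 * D2 u1 u2 pr v1 v2 qr (s, y)) (OmegaR R) := hN.sub (i2.const_mul 2)
    have hA2 : IntegrableOn (fun y => 2 * μ * D3 u1 u2 v1 v2 (s, y)) (OmegaR R) :=
      i3.const_mul (2 * μ)
    have hA : IntegrableOn (fun y => -(D1 u1 u2 θ v1 v2 θ' (s, y))
        - 2 * D2 u1 u2 pr v1 v2 qr (s, y) + 2 * μ * D3 u1 u2 v1 v2 (s, y)) (OmegaR R) :=
      hA1.add hA2
    rw [integral_add hA i4, integral_add hA1 hA2, integral_sub hN (i2.const_mul 2),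
      integral_neg, integral_const_mul, integral_const_mul]
  have h1 := integral_D1_eq_zero hsol hsol' hR hs
  have h2 := integral_D2_eq_zero hsol hsol' hR hs
  have h3 := integral_D3_nonpos hsol hsol' hR hμ hk0 hk1 hs
  have h3' : 2 * μ * (∫ y in OmegaR R, D3 u1 u2 v1 v2 (s, y)) ≤ 0 :=
    mul_nonpos_iff.2 (Or.inl ⟨by linarith, h3⟩)
  have h4 : (∫ y in OmegaR R, Bulk g1 g2 u1 u2 θ v1 v2 θ' (s, y)) ≤
      C * ∫ y in OmegaR R, Phi u1 u2 θ v1 v2 θ' (s, y) := by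
    have : (∫ y in OmegaR R, Bulk g1 g2 u1 u2 θ v1 v2 θ' (s, y)) ≤
        ∫ y in OmegaR R, C * Phi u1 u2 θ v1 v2 θ' (s, y) := by
      refine setIntegral_mono_on i4 (iP.const_mul C) (omegaR_measurable R) fun y hy => ?_
      exact hC (s, y) (Set.mem_prod.2 ⟨hs, hy⟩)
    rwa [integral_const_mul] at this
  rw [step1, step2, h1, h2]
  linarith

set_option maxHeartbeats 1000000 in
theorem energy_zero {T R μ k0 k1 g1 g2 : ℝ} {u1 u2 pr θ v1 v2 qr θ' : ℝ × ℝ × ℝ → ℝ}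
    (hsol : IsBoussinesqSolution T R μ k0 k1 g1 g2 u1 u2 pr θ)
    (hsol' : IsBoussinesqSolution T R μ k0 k1 g1 g2 v1 v2 qr θ')
    (hT : 0 < T) (hR : 0 < R) (hμ : 0 < μ) (hk0 : k0 ≤ 0) (hk1 : k1 ≤ 0)
    (hinit : ∀ x ∈ OmegaR R,
      u1 (0, x) = v1 (0, x) ∧ u2 (0, x) = v2 (0, x) ∧ θ (0, x) = θ' (0, x)) :
    ∀ t ∈ Icc (0:ℝ) T, (∫ y in OmegaR R, Phi u1 u2 θ v1 v2 θ' (t, y)) = 0 := by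
  have hPhiC := cont_Phi hsol hsol'
  have hHfC := cont_Hf hsol hsol'
  have hOmc : IsCompact (OmegaR R) := by rw [omega_eq]; exact isCompact_Icc
  have hOmfin : volume (OmegaR R) < ⊤ := hOmc.measure_lt_top
  set E : ℝ → ℝ := fun t => ∫ y in OmegaR R, Phi u1 u2 θ v1 v2 θ' (t, y) with hE
  set G : ℝ → ℝ := fun t => ∫ y in OmegaR R, Hf u1 u2 θ v1 v2 θ' (t, y) with hG
  -- continuity of G
  have hGc : Continuous G := by
    rw [continuous_iff_continuousAt]
    intro x
    have hK : IsCompact (Icc (x - 1) (x + 1) ×ˢ OmegaR R) := isCompact_Icc.prod hOmc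
    obtain ⟨M, hM⟩ := hK.exists_bound_of_continuousOn hHfC.continuousOn
    refine continuousAt_of_dominated (bound := fun _ => M) ?_ ?_ ?_ ?_
    · exact Filter.Eventually.of_forall fun s =>
        (hHfC.comp (continuous_const.prodMk continuous_id)).aestronglyMeasurable
    · filter_upwards [Ioo_mem_nhds (by linarith : x - 1 < x) (by linarith : x < x + 1)] with s hs
      refine (ae_restrict_iff' (omegaR_measurable R)).2 (Filter.Eventually.of_forall ?_)
      intro y hy
      exact hM (s, y) ⟨⟨hs.1.le, hs.2.le⟩, hy⟩
    · exact integrableOn_const hOmfin.ne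
    · exact Filter.Eventually.of_forall fun y =>
        (hHfC.comp (continuous_id.prodMk continuous_const)).continuousAt
  -- the fundamental identity
  have hiden : ∀ t ∈ Icc (0:ℝ) T, E t = E 0 + ∫ s in (0:ℝ)..t, G s := by
    intro t ht
    have hpt : ∀ y : ℝ × ℝ, Phi u1 u2 θ v1 v2 θ' (t, y) =
        Phi u1 u2 θ v1 v2 θ' (0, y) + ∫ s in (0:ℝ)..t, Hf u1 u2 θ v1 v2 θ' (s, y) := by
      intro y
      have hder : ∀ s ∈ uIcc (0:ℝ) t, HasDerivAt (fun s' : ℝ => Phi u1 u2 θ v1 v2 θ' (s', y))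
          (Hf u1 u2 θ v1 v2 θ' (s, y)) s := fun s _ =>
        hasDerivAt_Phi (hsol.regu1.differentiable one_ne_zero) (hsol.regu2.differentiable one_ne_zero)
          (hsol.regθ.differentiable one_ne_zero) (hsol'.regu1.differentiable one_ne_zero)
          (hsol'.regu2.differentiable one_ne_zero) (hsol'.regθ.differentiable one_ne_zero) s y
      have := intervalIntegral.integral_eq_sub_of_hasDerivAt hder
        ((hHfC.comp (continuous_id.prodMk continuous_const)).intervalIntegrable 0 t)
      linarith [this]
    have hprod : IntegrableOn (fun z : (ℝ × ℝ) × ℝ => Hf u1 u2 θ v1 v2 θ' (z.2, z.1))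
        (OmegaR R ×ˢ Ioc (0:ℝ) t) (volume.prod volume) := by
      refine IntegrableOn.mono_set ?_ (prod_mono_right Ioc_subset_Icc_self)
      exact ((hHfC.comp (continuous_snd.prodMk continuous_fst)).continuousOn).integrableOn_compact
        (hOmc.prod isCompact_Icc)
    have hunc : Integrable (Function.uncurry fun (y : ℝ × ℝ) (s : ℝ) =>
        Hf u1 u2 θ v1 v2 θ' (s, y))
        ((volume.restrict (OmegaR R)).prod (volume.restrict (Ioc (0:ℝ) t))) := by
      rw [Measure.prod_restrict]
      exact hprod
    have swap := integral_integral_swap hunc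
    have hfub : (∫ y in OmegaR R, ∫ s in Ioc (0:ℝ) t, Hf u1 u2 θ v1 v2 θ' (s, y)) =
        ∫ s in Ioc (0:ℝ) t, G s := by
      exact swap
    have hIone : IntegrableOn (fun y => Phi u1 u2 θ v1 v2 θ' (0, y)) (OmegaR R) :=
      ((hPhiC.comp (continuous_const.prodMk continuous_id)).continuousOn).integrableOn_compact
        hOmc
    have hItwo : IntegrableOn (fun y => ∫ s in Ioc (0:ℝ) t, Hf u1 u2 θ v1 v2 θ' (s, y))
        (OmegaR R) := hunc.integral_prod_left
    calc E t = ∫ y in OmegaR R, (Phi u1 u2 θ v1 v2 θ' (0, y)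
          + ∫ s in Ioc (0:ℝ) t, Hf u1 u2 θ v1 v2 θ' (s, y)) := by
          rw [hE]
          refine setIntegral_congr_fun (omegaR_measurable R) fun y _ => ?_
          rw [hpt y, intervalIntegral.integral_of_le ht.1]
      _ = E 0 + ∫ y in OmegaR R, (∫ s in Ioc (0:ℝ) t, Hf u1 u2 θ v1 v2 θ' (s, y)) := by
          rw [integral_add hIone hItwo]
      _ = E 0 + ∫ s in (0:ℝ)..t, G s := by
          rw [hfub, intervalIntegral.integral_of_le ht.1]
  -- continuity of E on [0, T]
  have hprim : ∀ x : ℝ, HasDerivAt (fun t => E 0 + ∫ s in (0:ℝ)..t, G s) (G x) x := by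
    intro x
    have := intervalIntegral.integral_hasDerivAt_right (hGc.intervalIntegrable 0 x)
      ⟨univ, Filter.univ_mem, hGc.aestronglyMeasurable.restrict⟩ hGc.continuousAt
    simpa using this
  have hEcont : ContinuousOn E (Icc 0 T) := by
    refine ContinuousOn.congr (f := fun t => E 0 + ∫ s in (0:ℝ)..t, G s) ?_ ?_
    · exact Continuous.continuousOn (continuous_iff_continuousAt.2 fun x =>
        (hprim x).continuousAt)
    · intro t ht; exact hiden t ht
  -- derivative of E from the right
  have hEder : ∀ x ∈ Ico (0:ℝ) T, HasDerivWithinAt E (G x) (Ici x) x := by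
    intro x hx
    have hmem : Ici x ∩ Iio T ∈ nhdsWithin x (Ici x) :=
      Filter.inter_mem self_mem_nhdsWithin
        (mem_nhdsWithin_of_mem_nhds (Iio_mem_nhds hx.2))
    have heq : E =ᶠ[nhdsWithin x (Ici x)] fun t => E 0 + ∫ s in (0:ℝ)..t, G s := by
      filter_upwards [hmem] with z hz
      exact hiden z ⟨le_trans hx.1 hz.1, hz.2.le⟩
    exact ((hprim x).hasDerivWithinAt).congr_of_eventuallyEq heq
      (hiden x ⟨hx.1, hx.2.le⟩)
  -- Grönwall
  obtain ⟨C, hCnn, hkey⟩ := key_ineq hsol hsol' hT hR hμ hk0 hk1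
  have hE0 : E 0 = 0 := by
    simp only [hE]
    rw [setIntegral_congr_fun (g := fun _ => (0:ℝ)) (omegaR_measurable R) ?_, integral_zero]
    intro y hy
    obtain ⟨e1, e2, e3⟩ := hinit y hy
    simp only [Phi, e1, e2, e3]
    ring
  have hgron : ∀ t ∈ Icc (0:ℝ) T, E t ≤ gronwallBound 0 C 0 (t - 0) := by
    refine le_gronwallBound_of_liminf_deriv_right_le hEcont (f' := G) ?_ (le_of_eq hE0) ?_
    · intro x hx r hr
      have := (hEder x hx).liminf_right_slope_le hr
      refine this.mono fun z hz => ?_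
      rwa [slope_def_field, div_eq_inv_mul] at hz
    · intro x hx
      have h := hkey x ⟨hx.1, hx.2.le⟩
      rw [add_zero]
      exact h
  intro t ht
  have h1 := hgron t ht
  rw [gronwallBound_ε0_δ0] at h1
  have h2 : 0 ≤ E t := by
    simp only [hE]
    refine setIntegral_nonneg (omegaR_measurable R) fun y _ => ?_
    simp only [Phi]
    positivity
  exact le_antisymm h1 h2

/-- a continuous nonnegative function on `Ω_R` with zero integral vanishes -/
theorem vanish_of_integral_zero {R : ℝ} (hR : 0 < R) (f : ℝ × ℝ → ℝ) (hf : Continuous f)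
    (hnn : ∀ y ∈ OmegaR R, 0 ≤ f y) (hzero : (∫ y in OmegaR R, f y) = 0) :
    ∀ y ∈ OmegaR R, f y = 0 := by
  intro y hy
  by_contra hne
  have hpos : 0 < f y := lt_of_le_of_ne (hnn y hy) (Ne.symm hne)
  set V : Set (ℝ × ℝ) := {z | f y / 2 < f z} with hV
  have hVopen : IsOpen V := isOpen_lt continuous_const hf
  have hyV : y ∈ V := by simp only [hV, mem_setOf_eq]; linarith
  set U : Set (ℝ × ℝ) := Ioo (-R) R ×ˢ Ioo (0:ℝ) 1 with hU
  have hUopen : IsOpen U := isOpen_Ioo.prod isOpen_Ioo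
  have hycl : y ∈ closure U := by
    rw [hU, closure_prod_eq, closure_Ioo (by linarith : -R ≠ R),
      closure_Ioo (by norm_num : (0:ℝ) ≠ 1)]
    exact hy
  have hWne : (V ∩ U).Nonempty := mem_closure_iff.1 hycl V hVopen hyV
  set W := V ∩ U with hW
  have hWopen : IsOpen W := hVopen.inter hUopen
  have hWsub : W ⊆ OmegaR R := fun z hz =>
    ⟨Ioo_subset_Icc_self hz.2.1, Ioo_subset_Icc_self hz.2.2⟩
  have hOmc : IsCompact (OmegaR R) := by rw [omega_eq]; exact isCompact_Icc
  have hWfin : volume W < ⊤ := lt_of_le_of_lt (measure_mono hWsub) hOmc.measure_lt_top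
  have hWpos : 0 < volume W := hWopen.measure_pos volume hWne
  have hiP : IntegrableOn f (OmegaR R) := hf.continuousOn.integrableOn_compact hOmc
  have mono1 : (∫ z in W, f z) ≤ ∫ z in OmegaR R, f z := by
    refine setIntegral_mono_set hiP ?_ (HasSubset.Subset.eventuallyLE hWsub)
    refine (ae_restrict_iff' (omegaR_measurable R)).2 (Filter.Eventually.of_forall ?_)
    exact hnn
  have mono2 : (∫ z in W, (f y / 2)) ≤ ∫ z in W, f z := by
    refine setIntegral_mono_on (integrableOn_const hWfin.ne)
      (hiP.mono_set hWsub) hWopen.measurableSet fun z hz => ?_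
    exact le_of_lt hz.1
  have hconst : (∫ _ in W, (f y / 2)) = (volume W).toReal * (f y / 2) := by
    rw [setIntegral_const]; rfl
  have htr : 0 < (volume W).toReal := ENNReal.toReal_pos hWpos.ne' hWfin.ne
  nlinarith [mono1, mono2, hconst, htr, hzero, hpos]

/-- Uniqueness of classical solutions to the semi-dissipative Boussinesq system
on a rectangle with Navier boundary conditions. -/
theorem boussinesq_uniqueness (T R μ k0 k1 g1 g2 : ℝ)
    (hT : 0 < T) (hR : 0 < R) (hμ : 0 < μ) (hk0 : k0 ≤ 0) (hk1 : k1 ≤ 0)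
    (u1 u2 pr θ v1 v2 qr θ' : ℝ × ℝ × ℝ → ℝ)
    (hsol : IsBoussinesqSolution T R μ k0 k1 g1 g2 u1 u2 pr θ)
    (hsol' : IsBoussinesqSolution T R μ k0 k1 g1 g2 v1 v2 qr θ')
    (hinit : ∀ x ∈ OmegaR R,
      u1 (0, x) = v1 (0, x) ∧ u2 (0, x) = v2 (0, x) ∧ θ (0, x) = θ' (0, x)) :
    ∀ p ∈ (Icc (0 : ℝ) T) ×ˢ OmegaR R,
      u1 p = v1 p ∧ u2 p = v2 p ∧ θ p = θ' p := by
  intro p hp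
  obtain ⟨t, x⟩ := p
  have ht : t ∈ Icc (0:ℝ) T := hp.1
  have hx : x ∈ OmegaR R := hp.2
  have hEzero := energy_zero hsol hsol' hT hR hμ hk0 hk1 hinit t ht
  have hPhiC := cont_Phi hsol hsol'
  have hPzero : Phi u1 u2 θ v1 v2 θ' (t, x) = 0 := by
    refine vanish_of_integral_zero hR (fun y => Phi u1 u2 θ v1 v2 θ' (t, y))
      (hPhiC.comp (continuous_const.prodMk continuous_id)) (fun y _ => ?_) hEzero x hx
    simp only [Phi]; positivity
  have h1 : (u1 (t, x) - v1 (t, x)) ^ 2 = 0 := by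
    simp only [Phi] at hPzero
    nlinarith [sq_nonneg (u1 (t, x) - v1 (t, x)), sq_nonneg (u2 (t, x) - v2 (t, x)),
      sq_nonneg (θ (t, x) - θ' (t, x))]
  have h2 : (u2 (t, x) - v2 (t, x)) ^ 2 = 0 := by
    simp only [Phi] at hPzero
    nlinarith [sq_nonneg (u1 (t, x) - v1 (t, x)), sq_nonneg (u2 (t, x) - v2 (t, x)),
      sq_nonneg (θ (t, x) - θ' (t, x))]
  have h3 : (θ (t, x) - θ' (t, x)) ^ 2 = 0 := by
    simp only [Phi] at hPzero
    nlinarith [sq_nonneg (u1 (t, x) - v1 (t, x)), sq_nonneg (u2 (t, x) - v2 (t, x)),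
      sq_nonneg (θ (t, x) - θ' (t, x))]
  refine ⟨?_, ?_, ?_⟩
  · have := pow_eq_zero_iff (n := 2) (by norm_num) |>.1 h1
    linarith [this]
  · have := pow_eq_zero_iff (n := 2) (by norm_num) |>.1 h2
    linarith [this]
  · have := pow_eq_zero_iff (n := 2) (by norm_num) |>.1 h3
    linarith [this]
end
end
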